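/- arXiv:1409.1436 — 3 statements merged into one kernel-verified Lean document; each statement's English description precedes it below -/
import Mathlib

section
/- (Proposition 3, part 2.) Consider the dynamics with cost c satisfying 0 ≤ c < c_0 = 2/n + (1−2/n)·max_i ρ^i_0 − min_i ρ^i_0. Let t̄ be the least period with c_{t̄} ≤ c and suppose t̄ ≤ n−1. Assume that for every t ≤ t̄ the least and most accurate agents are unique, that l_t ≠ h_0 for t < min(t̄, n−1), and that for every t < t̄, P^{h_t}_t(l_t,k) ≠ G_t(l_t,k) for some k ∉ {l_t,h_t}. Then exactly one link is added at each period t = 0, 1, …, t̄−1 and no link is ever added at any period s ≥ t̄; hence G_s = G_{t̄} for all s ≥ t̄ and the steady-state network has exactly t̄ links. -/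
open Finset

/-- Accuracy of perception `P` with respect to network `G` on `n` agents. -/
noncomputable def acc (n : ℕ) (G P : Fin n → Fin n → Bool) : ℝ :=
  (((Finset.univ : Finset (Fin n × Fin n)).filter fun pr =>
      pr.1 < pr.2 ∧ P pr.1 pr.2 = G pr.1 pr.2).card : ℝ) / ((n : ℝ) * ((n : ℝ) - 1) / 2)

/-- The coevolution dynamics of a network and perceptions, with linking cost `c`.
`G t` is the network at period `t`, `P t i` is agent `i`'s perception at period `t`,
`l t` is the chosen least accurate agent and `h t` the chosen most accurate agent. -/
structure Dyn (n : ℕ) (c : ℝ) where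
  G : ℕ → Fin n → Fin n → Bool
  P : ℕ → Fin n → Fin n → Fin n → Bool
  l : ℕ → Fin n
  h : ℕ → Fin n
  G_symm : ∀ t j k, G t j k = G t k j
  G_irrefl : ∀ t i, G t i i = false
  P_symm : ∀ t i j k, P t i j k = P t i k j
  P_irrefl : ∀ t i j, P t i j j = false
  G_init : ∀ j k, G 0 j k = false
  own_correct : ∀ t i k, P t i i k = G t i k
  l_min : ∀ t i, acc n (G t) (P t (l t)) ≤ acc n (G t) (P t i)
  h_max : ∀ t i, acc n (G t) (P t i) ≤ acc n (G t) (P t (h t))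
  h_pref : ∀ t, (∃ i, G t (l t) i = true ∧
      ∀ j, acc n (G t) (P t j) ≤ acc n (G t) (P t i)) → G t (l t) (h t) = true
  step_old : ∀ t, G t (l t) (h t) = true →
      (G (t + 1) = G t ∧
        ∀ j k, j ≠ l t → k ≠ l t → P (t + 1) (l t) j k = P t (h t) j k)
  step_add : ∀ t, G t (l t) (h t) = false →
      c < 2 / (n : ℝ) + (1 - 2 / (n : ℝ)) * acc n (G t) (P t (h t))
          - acc n (G t) (P t (l t)) →
      ((∀ j k, G (t + 1) j k = true ↔
          (G t j k = true ∨ (j = l t ∧ k = h t) ∨ (j = h t ∧ k = l t))) ∧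
        ∀ j k, j ≠ l t → k ≠ l t → P (t + 1) (l t) j k = P t (h t) j k)
  step_none : ∀ t, G t (l t) (h t) = false →
      ¬ (c < 2 / (n : ℝ) + (1 - 2 / (n : ℝ)) * acc n (G t) (P t (h t))
          - acc n (G t) (P t (l t))) →
      (G (t + 1) = G t ∧ ∀ i, P (t + 1) i = P t i)
  keep : ∀ t i, i ≠ l t → ∀ j k, j ≠ i → k ≠ i → P (t + 1) i j k = P t i j k

namespace Dyn

variable {n : ℕ} {c : ℝ}

/-- Accuracy of agent `i` at period `t`. -/
noncomputable def rho (D : Dyn n c) (t : ℕ) (i : Fin n) : ℝ :=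
  acc n (D.G t) (D.P t i)

/-- The threshold cost `c_t = 2/n + (1 − 2/n)·ρ^{h_t}_t − ρ^{l_t}_t`. -/
noncomputable def thr (D : Dyn n c) (t : ℕ) : ℝ :=
  2 / (n : ℝ) + (1 - 2 / (n : ℝ)) * D.rho t (D.h t) - D.rho t (D.l t)

/-- Number of links in a network. -/
def numLinks (G : Fin n → Fin n → Bool) : ℕ :=
  ((Finset.univ : Finset (Fin n × Fin n)).filter fun pr =>
    pr.1 < pr.2 ∧ G pr.1 pr.2 = true).card

end Dyn

section Counting

variable {n : ℕ}

/-- Number of agreeing pairs. -/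
def agr (n : ℕ) (G P : Fin n → Fin n → Bool) : ℕ :=
  (((Finset.univ : Finset (Fin n × Fin n)).filter fun pr =>
      pr.1 < pr.2 ∧ P pr.1 pr.2 = G pr.1 pr.2).card)

lemma acc_eq (G P : Fin n → Fin n → Bool) :
    acc n G P = (agr n G P : ℝ) / ((n : ℝ) * ((n : ℝ) - 1) / 2) := rfl

lemma Mpos (hn : 3 ≤ n) : (0:ℝ) < (n : ℝ) * ((n : ℝ) - 1) / 2 := by
  have : (3:ℝ) ≤ (n:ℝ) := by exact_mod_cast hn
  nlinarith

lemma acc_le_acc_iff (hn : 3 ≤ n) {G P G' Q : Fin n → Fin n → Bool} :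
    acc n G P ≤ acc n G' Q ↔ agr n G P ≤ agr n G' Q := by
  rw [acc_eq, acc_eq, div_le_div_iff_of_pos_right (Mpos hn), Nat.cast_le]

lemma acc_lt_acc_iff (hn : 3 ≤ n) {G P G' Q : Fin n → Fin n → Bool} :
    acc n G P < acc n G' Q ↔ agr n G P < agr n G' Q := by
  rw [acc_eq, acc_eq, div_lt_div_iff_of_pos_right (Mpos hn), Nat.cast_lt]

lemma agr_congr {G G' P Q : Fin n → Fin n → Bool}
    (h : ∀ j k : Fin n, j < k → ((P j k = G j k) ↔ (Q j k = G' j k))) :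
    agr n G P = agr n G' Q := by
  unfold agr
  congr 1
  apply Finset.filter_congr
  intro pr _
  constructor
  · rintro ⟨h1, h2⟩; exact ⟨h1, (h pr.1 pr.2 h1).1 h2⟩
  · rintro ⟨h1, h2⟩; exact ⟨h1, (h pr.1 pr.2 h1).2 h2⟩

/-- agreeing pairs containing vertex `v`. -/
def agrWith (n : ℕ) (v : Fin n) (G P : Fin n → Fin n → Bool) : ℕ :=
  (((Finset.univ : Finset (Fin n × Fin n)).filter fun pr =>
      (pr.1 < pr.2 ∧ P pr.1 pr.2 = G pr.1 pr.2) ∧ (pr.1 = v ∨ pr.2 = v)).card)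

/-- agreeing pairs avoiding vertex `v`. -/
def agrAway (n : ℕ) (v : Fin n) (G P : Fin n → Fin n → Bool) : ℕ :=
  (((Finset.univ : Finset (Fin n × Fin n)).filter fun pr =>
      (pr.1 < pr.2 ∧ P pr.1 pr.2 = G pr.1 pr.2) ∧ ¬(pr.1 = v ∨ pr.2 = v)).card)

lemma agr_split (v : Fin n) (G P : Fin n → Fin n → Bool) :
    agr n G P = agrWith n v G P + agrAway n v G P := by
  classical
  have h := Finset.card_filter_add_card_filter_not
    (s := ((Finset.univ : Finset (Fin n × Fin n)).filter fun pr =>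
      pr.1 < pr.2 ∧ P pr.1 pr.2 = G pr.1 pr.2))
    (p := fun pr => pr.1 = v ∨ pr.2 = v)
  rw [Finset.filter_filter, Finset.filter_filter] at h
  unfold agr agrWith agrAway
  exact h.symm

lemma card_pairsWith (hn : 3 ≤ n) (v : Fin n) :
    (((Finset.univ : Finset (Fin n × Fin n)).filter fun pr =>
      pr.1 < pr.2 ∧ (pr.1 = v ∨ pr.2 = v)).card) = n - 1 := by
  have : (((Finset.univ : Finset (Fin n)).erase v).card) = n - 1 := by
    rw [Finset.card_erase_of_mem (Finset.mem_univ v)]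
    simp
  rw [← this]
  apply Finset.card_bij' (i := fun pr _ => if pr.1 = v then pr.2 else pr.1)
    (j := fun k _ => if v < k then (v, k) else (k, v))
  · intro pr hpr
    simp only [Finset.mem_filter, Finset.mem_univ, true_and] at hpr
    obtain ⟨hlt, hor⟩ := hpr
    by_cases h1 : pr.1 = v
    · simp only [h1, if_true, Finset.mem_erase, Finset.mem_univ, and_true]
      intro hc
      rw [h1, hc] at hlt
      exact lt_irrefl _ hlt
    · have h2 : pr.2 = v := by tauto
      simp only [h1, if_false, Finset.mem_erase, Finset.mem_univ, and_true]
      intro hc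
      rw [hc, ← h2] at hlt
      exact lt_irrefl _ hlt
  · intro k hk
    simp only [Finset.mem_erase, Finset.mem_univ, and_true] at hk
    by_cases h : v < k
    · simp [h]
    · have hkv : k < v := lt_of_le_of_ne (not_lt.mp h) hk
      simp [h, hkv]
  · intro pr hpr
    simp only [Finset.mem_filter, Finset.mem_univ, true_and] at hpr
    obtain ⟨hlt, hor⟩ := hpr
    by_cases h1 : pr.1 = v
    · have hv2 : v < pr.2 := h1 ▸ hlt
      simp only [h1, if_true, hv2, if_true]
      exact Prod.ext h1.symm rfl
    · have h2 : pr.2 = v := by tauto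
      have hv1 : ¬ (v < pr.1) := by rw [← h2]; exact not_lt.mpr (le_of_lt hlt)
      simp only [h1, if_false, hv1, if_false]
      exact Prod.ext rfl h2.symm
  · intro k hk
    simp only [Finset.mem_erase, Finset.mem_univ, and_true] at hk
    by_cases h : v < k
    · simp [h, (ne_of_lt h).symm]
    · simp [h, hk]
lemma agrWith_le (hn : 3 ≤ n) (v : Fin n) (G P : Fin n → Fin n → Bool) :
    agrWith n v G P ≤ n - 1 := by
  rw [← card_pairsWith hn v]
  apply Finset.card_le_card
  intro pr hpr
  simp only [Finset.mem_filter, Finset.mem_univ, true_and] at hpr ⊢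
  exact ⟨hpr.1.1, hpr.2⟩

lemma agrWith_eq (hn : 3 ≤ n) (v : Fin n) {G P : Fin n → Fin n → Bool}
    (h : ∀ j k : Fin n, j < k → (j = v ∨ k = v) → P j k = G j k) :
    agrWith n v G P = n - 1 := by
  rw [← card_pairsWith hn v]
  unfold agrWith
  congr 1
  apply Finset.filter_congr
  intro pr _
  constructor
  · rintro ⟨⟨h1, _⟩, h2⟩; exact ⟨h1, h2⟩
  · rintro ⟨h1, h2⟩; exact ⟨⟨h1, h pr.1 pr.2 h1 h2⟩, h2⟩

lemma agrWith_lt (hn : 3 ≤ n) (v : Fin n) {G P : Fin n → Fin n → Bool}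
    (hex : ∃ j k : Fin n, j < k ∧ (j = v ∨ k = v) ∧ P j k ≠ G j k) :
    agrWith n v G P + 1 ≤ n - 1 := by
  rw [← card_pairsWith hn v]
  obtain ⟨j, k, hjk, hor, hne⟩ := hex
  have : agrWith n v G P < (((Finset.univ : Finset (Fin n × Fin n)).filter fun pr =>
      pr.1 < pr.2 ∧ (pr.1 = v ∨ pr.2 = v)).card) := by
    apply Finset.card_lt_card
    constructor
    · intro pr hpr
      simp only [Finset.mem_filter, Finset.mem_univ, true_and] at hpr ⊢
      exact ⟨hpr.1.1, hpr.2⟩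
    · intro hsub
      have := hsub (x := (j, k)) (by simp [hjk, hor])
      simp only [Finset.mem_filter, Finset.mem_univ, true_and] at this
      exact hne this.1.2
  omega

lemma agrAway_congr {v : Fin n} {G G' P Q : Fin n → Fin n → Bool}
    (h : ∀ j k : Fin n, j < k → j ≠ v → k ≠ v → ((P j k = G j k) ↔ (Q j k = G' j k))) :
    agrAway n v G P = agrAway n v G' Q := by
  unfold agrAway
  congr 1
  apply Finset.filter_congr
  intro pr _
  simp only [not_or]
  constructor
  · rintro ⟨⟨h1, h2⟩, h3, h4⟩; exact ⟨⟨h1, (h pr.1 pr.2 h1 h3 h4).1 h2⟩, h3, h4⟩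
  · rintro ⟨⟨h1, h2⟩, h3, h4⟩; exact ⟨⟨h1, (h pr.1 pr.2 h1 h3 h4).2 h2⟩, h3, h4⟩

lemma agr_flip {G G' P : Fin n → Fin n → Bool} (a b : Fin n) (hab : a < b)
    (hG : G a b = false) (hG' : G' a b = true)
    (hsame : ∀ j k : Fin n, j < k → (j, k) ≠ (a, b) → G' j k = G j k) :
    (P a b = true → agr n G' P = agr n G P + 1) ∧
    (P a b = false → agr n G P = agr n G' P + 1) := by
  classical
  set S := ((Finset.univ : Finset (Fin n × Fin n)).filter fun pr =>
      pr.1 < pr.2 ∧ P pr.1 pr.2 = G pr.1 pr.2) with hS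
  set S' := ((Finset.univ : Finset (Fin n × Fin n)).filter fun pr =>
      pr.1 < pr.2 ∧ P pr.1 pr.2 = G' pr.1 pr.2) with hS'
  have hkey : S.erase (a, b) = S'.erase (a, b) := by
    ext pr
    simp only [Finset.mem_erase, hS, hS', Finset.mem_filter, Finset.mem_univ, true_and]
    constructor
    · rintro ⟨hne, h1, h2⟩
      exact ⟨hne, h1, by rw [hsame pr.1 pr.2 h1 (by simpa using hne)]; exact h2⟩
    · rintro ⟨hne, h1, h2⟩
      exact ⟨hne, h1, by rw [← hsame pr.1 pr.2 h1 (by simpa using hne)]; exact h2⟩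
  have hmemS : (a, b) ∈ S ↔ P a b = false := by
    simp [hS, hab, hG]
  have hmemS' : (a, b) ∈ S' ↔ P a b = true := by
    simp [hS', hab, hG']
  constructor
  · intro hP
    have h1 : (a, b) ∉ S := by rw [hmemS]; simp [hP]
    have h2 : (a, b) ∈ S' := hmemS'.mpr hP
    have : S'.card = (S'.erase (a,b)).card + 1 := (Finset.card_erase_add_one h2).symm
    rw [agr, agr, ← hS, ← hS', this, ← hkey, Finset.erase_eq_of_notMem h1]
  · intro hP
    have h1 : (a, b) ∈ S := hmemS.mpr (by simp [hP])
    have h2 : (a, b) ∉ S' := by rw [hmemS']; simp [hP]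
    have : S.card = (S.erase (a,b)).card + 1 := (Finset.card_erase_add_one h1).symm
    rw [agr, agr, ← hS, ← hS', this, hkey, Finset.erase_eq_of_notMem h2]

lemma numLinks_flip {G G' : Fin n → Fin n → Bool} (a b : Fin n) (hab : a < b)
    (hG : G a b = false) (hG' : G' a b = true)
    (hsame : ∀ j k : Fin n, j < k → (j, k) ≠ (a, b) → G' j k = G j k) :
    Dyn.numLinks G' = Dyn.numLinks G + 1 := by
  classical
  set S := ((Finset.univ : Finset (Fin n × Fin n)).filter fun pr =>
      pr.1 < pr.2 ∧ G pr.1 pr.2 = true) with hS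
  set S' := ((Finset.univ : Finset (Fin n × Fin n)).filter fun pr =>
      pr.1 < pr.2 ∧ G' pr.1 pr.2 = true) with hS'
  have hkey : S.erase (a, b) = S'.erase (a, b) := by
    ext pr
    simp only [Finset.mem_erase, hS, hS', Finset.mem_filter, Finset.mem_univ, true_and]
    constructor
    · rintro ⟨hne, h1, h2⟩
      exact ⟨hne, h1, by rw [hsame pr.1 pr.2 h1 (by simpa using hne)]; exact h2⟩
    · rintro ⟨hne, h1, h2⟩
      exact ⟨hne, h1, by rw [← hsame pr.1 pr.2 h1 (by simpa using hne)]; exact h2⟩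
  have h1 : (a, b) ∉ S := by simp [hS, hab, hG]
  have h2 : (a, b) ∈ S' := by simp [hS', hab, hG']
  have : S'.card = (S'.erase (a,b)).card + 1 := (Finset.card_erase_add_one h2).symm
  rw [Dyn.numLinks, Dyn.numLinks, ← hS, ← hS', this, ← hkey, Finset.erase_eq_of_notMem h1]

lemma bool_ext {x y : Bool} (h : x = true ↔ y = true) : x = y := by
  cases x <;> cases y <;> simp_all

end Counting
namespace Dyn

variable {n : ℕ} {c : ℝ}

/-- Agreement count of agent `i` at time `t`. -/
def cnt (D : Dyn n c) (t : ℕ) (i : Fin n) : ℕ := agr n (D.G t) (D.P t i)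

lemma rho_le_iff (hn : 3 ≤ n) (D : Dyn n c) {t t' : ℕ} {i j : Fin n} :
    D.rho t i ≤ D.rho t' j ↔ D.cnt t i ≤ D.cnt t' j :=
  acc_le_acc_iff hn

lemma rho_lt_iff (hn : 3 ≤ n) (D : Dyn n c) {t t' : ℕ} {i j : Fin n} :
    D.rho t i < D.rho t' j ↔ D.cnt t i < D.cnt t' j :=
  acc_lt_acc_iff hn

lemma rho_eq_of_cnt (hn : 3 ≤ n) (D : Dyn n c) {t t' : ℕ} {i j : Fin n}
    (h : D.cnt t i = D.cnt t' j) : D.rho t i = D.rho t' j := by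
  have h1 := (D.rho_le_iff hn (t := t) (t' := t') (i := i) (j := j)).mpr h.le
  have h2 := (D.rho_le_iff hn (t := t') (t' := t) (i := j) (j := i)).mpr h.ge
  linarith

lemma own (D : Dyn n c) (t : ℕ) (i j k : Fin n) (h : j = i ∨ k = i) :
    D.P t i j k = D.G t j k := by
  rcases h with h | h
  · subst h; exact D.own_correct t j k
  · subst h; rw [D.P_symm t k j k, D.own_correct t k j, D.G_symm t k j]

lemma persist (D : Dyn n c) {i a b : Fin n} (ha : a ≠ i) (hb : b ≠ i) {t0 t1 : ℕ}
    (h : t0 ≤ t1) (hnl : ∀ q, t0 ≤ q → q < t1 → i ≠ D.l q) :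
    D.P t1 i a b = D.P t0 i a b := by
  induction t1, h using Nat.le_induction with
  | base => rfl
  | succ m hm ih =>
    rw [D.keep m i (hnl m hm (Nat.lt_succ_self m)) a b ha hb]
    exact ih fun q h1 h2 => hnl q h1 (Nat.lt_succ_of_lt h2)

lemma chain (D : Dyn n c) :
    ∀ (s : ℕ) (a b : Fin n), (∀ q, q ≤ s → a ≠ D.l q ∧ b ≠ D.l q) →
    (∀ r, r ≤ s → ∀ j k : Fin n, j ≠ D.l r → k ≠ D.l r →
      D.P (r+1) (D.l r) j k = D.P r (D.h r) j k) →
    (∀ r, r + 1 ≤ s → D.h (r+1) = D.l r) →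
    D.P (s+1) (D.l s) a b = D.P 0 (D.h 0) a b := by
  intro s
  induction s with
  | zero =>
    intro a b hq hcopy _
    exact hcopy 0 le_rfl a b (hq 0 le_rfl).1 (hq 0 le_rfl).2
  | succ s ih =>
    intro a b hq hcopy hh
    rw [hcopy (s+1) le_rfl a b (hq (s+1) le_rfl).1 (hq (s+1) le_rfl).2,
      hh s le_rfl]
    exact ih a b (fun q h => hq q (Nat.le_succ_of_le h))
      (fun r h => hcopy r (Nat.le_succ_of_le h))
      (fun r h => hh r (Nat.le_succ_of_le h))

/-- The network after an add step, away from the new link. -/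
lemma Gnext_same (D : Dyn n c) {t : ℕ}
    (hiff : ∀ j k : Fin n, D.G (t+1) j k = true ↔
      (D.G t j k = true ∨ (j = D.l t ∧ k = D.h t) ∨ (j = D.h t ∧ k = D.l t)))
    {j k : Fin n} (h1 : ¬(j = D.l t ∧ k = D.h t)) (h2 : ¬(j = D.h t ∧ k = D.l t)) :
    D.G (t+1) j k = D.G t j k := by
  apply bool_ext
  rw [hiff]
  tauto

lemma Gnext_lh (D : Dyn n c) {t : ℕ}
    (hiff : ∀ j k : Fin n, D.G (t+1) j k = true ↔
      (D.G t j k = true ∨ (j = D.l t ∧ k = D.h t) ∨ (j = D.h t ∧ k = D.l t))) :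
    D.G (t+1) (D.l t) (D.h t) = true :=
  (hiff _ _).mpr (Or.inr (Or.inl ⟨rfl, rfl⟩))

lemma Gnext_hl (D : Dyn n c) {t : ℕ}
    (hiff : ∀ j k : Fin n, D.G (t+1) j k = true ↔
      (D.G t j k = true ∨ (j = D.l t ∧ k = D.h t) ∨ (j = D.h t ∧ k = D.l t))) :
    D.G (t+1) (D.h t) (D.l t) = true :=
  (hiff _ _).mpr (Or.inr (Or.inr ⟨rfl, rfl⟩))

/-- Agents other than the updater whose own links are untouched keep their perception. -/
lemma P_uninv (D : Dyn n c) {t : ℕ} {i : Fin n} (hil : i ≠ D.l t)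
    (hG : ∀ k, D.G (t+1) i k = D.G t i k) :
    ∀ j k, D.P (t+1) i j k = D.P t i j k := by
  intro j k
  by_cases hj : j = i
  · subst hj; rw [D.own_correct, D.own_correct, hG]
  · by_cases hk : k = i
    · subst hk
      rw [D.P_symm (t+1) k j k, D.P_symm t k j k, D.own_correct, D.own_correct, hG]
    · exact D.keep t i hil j k hj hk

lemma cnt_h_eq (D : Dyn n c) {t : ℕ} (hlh : D.l t ≠ D.h t)
    (hGsame : ∀ j k : Fin n, j ≠ D.h t → k ≠ D.h t → D.G (t+1) j k = D.G t j k) :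
    D.cnt (t+1) (D.h t) = D.cnt t (D.h t) := by
  apply agr_congr
  intro j k _
  by_cases hcon : j = D.h t ∨ k = D.h t
  · exact iff_of_true (D.own (t+1) (D.h t) j k hcon) (D.own t (D.h t) j k hcon)
  · push_neg at hcon
    rw [D.keep t (D.h t) (Ne.symm hlh) j k hcon.1 hcon.2, hGsame j k hcon.1 hcon.2]

lemma cnt_uninv (D : Dyn n c) {t : ℕ} {i : Fin n} (hlh : D.l t ≠ D.h t)
    (hfalse : D.G t (D.l t) (D.h t) = false)
    (hiff : ∀ j k : Fin n, D.G (t+1) j k = true ↔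
      (D.G t j k = true ∨ (j = D.l t ∧ k = D.h t) ∨ (j = D.h t ∧ k = D.l t)))
    (hil : i ≠ D.l t) (hih : i ≠ D.h t) :
    (D.P t i (D.l t) (D.h t) = true → D.cnt (t+1) i = D.cnt t i + 1) ∧
    (D.P t i (D.l t) (D.h t) = false → D.cnt t i = D.cnt (t+1) i + 1) := by
  have hG : ∀ k, D.G (t+1) i k = D.G t i k := fun k =>
    D.Gnext_same hiff (fun hc => hil hc.1) (fun hc => hih hc.1)
  have hP : D.cnt (t+1) i = agr n (D.G (t+1)) (D.P t i) := by
    apply agr_congr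
    intro j k _
    rw [D.P_uninv hil hG j k]
  rw [hP]
  show (_ → agr n (D.G (t+1)) (D.P t i) = agr n (D.G t) (D.P t i) + 1) ∧ _
  rcases hlh.lt_or_gt with hlt | hgt
  · have := agr_flip (P := D.P t i) (D.l t) (D.h t) hlt hfalse (D.Gnext_lh hiff)
      (fun j k hjk hne => D.Gnext_same hiff
        (fun hc => hne (by rw [hc.1, hc.2]))
        (fun hc => absurd hjk (by rw [hc.1, hc.2]; exact not_lt.mpr hlt.le)))
    exact this
  · have hfalse' : D.G t (D.h t) (D.l t) = false := by rw [D.G_symm]; exact hfalse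
    have := agr_flip (P := D.P t i) (D.h t) (D.l t) hgt hfalse' (D.Gnext_hl hiff)
      (fun j k hjk hne => D.Gnext_same hiff
        (fun hc => absurd hjk (by rw [hc.1, hc.2]; exact not_lt.mpr hgt.le))
        (fun hc => hne (by rw [hc.1, hc.2])))
    rw [D.P_symm t i (D.l t) (D.h t)]
    exact this

lemma cnt_l_succ (hn : 3 ≤ n) (D : Dyn n c) {t : ℕ} (hlh : D.l t ≠ D.h t)
    (hiff : ∀ j k : Fin n, D.G (t+1) j k = true ↔
      (D.G t j k = true ∨ (j = D.l t ∧ k = D.h t) ∨ (j = D.h t ∧ k = D.l t)))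
    (hcopy : ∀ j k : Fin n, j ≠ D.l t → k ≠ D.l t →
      D.P (t+1) (D.l t) j k = D.P t (D.h t) j k)
    (hmis : ∃ k, k ≠ D.l t ∧ k ≠ D.h t ∧ D.P t (D.h t) (D.l t) k ≠ D.G t (D.l t) k) :
    D.cnt (t+1) (D.h t) + 1 ≤ D.cnt (t+1) (D.l t) := by
  have e1 : D.cnt (t+1) (D.l t) =
      agrWith n (D.l t) (D.G (t+1)) (D.P (t+1) (D.l t)) +
      agrAway n (D.l t) (D.G (t+1)) (D.P (t+1) (D.l t)) := agr_split _ _ _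
  have e2 : D.cnt (t+1) (D.h t) =
      agrWith n (D.l t) (D.G (t+1)) (D.P (t+1) (D.h t)) +
      agrAway n (D.l t) (D.G (t+1)) (D.P (t+1) (D.h t)) := agr_split _ _ _
  have eW : agrWith n (D.l t) (D.G (t+1)) (D.P (t+1) (D.l t)) = n - 1 :=
    agrWith_eq hn _ (fun j k _ h => D.own (t+1) (D.l t) j k h)
  have eA : agrAway n (D.l t) (D.G (t+1)) (D.P (t+1) (D.l t)) =
      agrAway n (D.l t) (D.G (t+1)) (D.P (t+1) (D.h t)) := by
    apply agrAway_congr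
    intro j k _ hj hk
    have h1 : D.P (t+1) (D.l t) j k = D.P t (D.h t) j k := hcopy j k hj hk
    have h2 : D.P (t+1) (D.h t) j k = D.P t (D.h t) j k := by
      by_cases hcon : j = D.h t ∨ k = D.h t
      · rw [D.own (t+1) (D.h t) j k hcon, D.own t (D.h t) j k hcon]
        exact D.Gnext_same hiff (fun hc => hj hc.1) (fun hc => hk hc.2)
      · push_neg at hcon
        exact D.keep t (D.h t) (Ne.symm hlh) j k hcon.1 hcon.2
    rw [h1, ← h2]
  have hWlt : agrWith n (D.l t) (D.G (t+1)) (D.P (t+1) (D.h t)) + 1 ≤ n - 1 := by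
    apply agrWith_lt hn
    obtain ⟨k0, hk0l, hk0h, hk0⟩ := hmis
    have hp : D.P (t+1) (D.h t) (D.l t) k0 = D.P t (D.h t) (D.l t) k0 :=
      D.keep t (D.h t) (Ne.symm hlh) (D.l t) k0 hlh hk0h
    have hg : D.G (t+1) (D.l t) k0 = D.G t (D.l t) k0 :=
      D.Gnext_same hiff (fun hc => hk0h hc.2) (fun hc => hlh hc.1)
    have hne : D.P (t+1) (D.h t) (D.l t) k0 ≠ D.G (t+1) (D.l t) k0 := by
      rw [hp, hg]; exact hk0
    rcases (Ne.symm hk0l).lt_or_gt with hlt | hgt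
    · exact ⟨D.l t, k0, hlt, Or.inl rfl, hne⟩
    · refine ⟨k0, D.l t, hgt, Or.inr rfl, ?_⟩
      rw [D.P_symm (t+1) (D.h t) k0 (D.l t), D.G_symm (t+1) k0 (D.l t)]
      exact hne
  omega

end Dyn
/-- The invariant carried along the build-up phase. -/
structure MainInv {n : ℕ} {c : ℝ} (D : Dyn n c) (t : ℕ) : Prop where
  fstep : ∀ r, r < t → D.G r (D.l r) (D.h r) = false
  fh : ∀ r, r < t → D.h (r+1) = D.l r
  ffresh1 : ∀ r, r < t → D.l r ≠ D.h 0
  ffresh2 : ∀ r, r < t → ∀ q, q < r → D.l r ≠ D.l q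
  fedges : ∀ j k, D.G t j k = true ↔
    ∃ r, r < t ∧ ((j = D.l r ∧ k = D.h r) ∨ (j = D.h r ∧ k = D.l r))
  fnum : Dyn.numLinks (D.G t) = t
  fm : D.cnt 0 (D.h 0) + t ≤ D.cnt t (D.h t)
  fh0 : t = 0 ∨ D.cnt t (D.h 0) + 1 ≤ D.cnt 0 (D.h 0) + t
  fsettle : ∀ s, s + 2 ≤ t → D.cnt t (D.h 0) ≤ D.cnt t (D.l s)

variable {n : ℕ} {c : ℝ}

lemma l_ne_h (hn : 3 ≤ n) (D : Dyn n c) (tbar : ℕ)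
    (huniq : ∀ t, t ≤ tbar →
      (∀ i, i ≠ D.l t → D.rho t (D.l t) < D.rho t i) ∧
      (∀ i, i ≠ D.h t → D.rho t i < D.rho t (D.h t)))
    {t : ℕ} (ht : t ≤ tbar) : D.l t ≠ D.h t := by
  intro heq
  have hz : (⟨0, by omega⟩ : Fin n) ≠ (⟨1, by omega⟩ : Fin n) := by
    simp [Fin.ext_iff]
  obtain ⟨i, hi⟩ : ∃ i : Fin n, i ≠ D.l t := by
    by_cases h : D.l t = (⟨0, by omega⟩ : Fin n)
    · exact ⟨⟨1, by omega⟩, by rw [h]; exact hz.symm⟩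
    · exact ⟨⟨0, by omega⟩, fun hc => h hc.symm⟩
  have h1 := (huniq t ht).1 i hi
  have h2 := (huniq t ht).2 i (by rw [← heq]; exact hi)
  rw [heq] at h1
  linarith

lemma fresh_settle (hn : 3 ≤ n) (D : Dyn n c) (tbar : ℕ)
    (huniq : ∀ t, t ≤ tbar →
      (∀ i, i ≠ D.l t → D.rho t (D.l t) < D.rho t i) ∧
      (∀ i, i ≠ D.h t → D.rho t i < D.rho t (D.h t)))
    {t : ℕ} (ht : t ≤ tbar) (inv : MainInv D t) :
    ∀ q, q + 2 ≤ t → D.l t ≠ D.l q := by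
  intro q hq heq
  have hqh0 : D.l q ≠ D.h 0 := inv.ffresh1 q (by omega)
  have h0ne : D.h 0 ≠ D.l t := by rw [heq]; exact Ne.symm hqh0
  have hlt := (huniq t ht).1 (D.h 0) h0ne
  have hcnt : D.cnt t (D.l t) < D.cnt t (D.h 0) := (acc_lt_acc_iff hn).mp hlt
  have hst := inv.fsettle q hq
  rw [heq] at hcnt
  omega

lemma main_inv (hn : 3 ≤ n) (D : Dyn n c) (tbar : ℕ)
    (htb2 : ∀ s, s < tbar → c < D.thr s) (htbn : tbar ≤ n - 1)
    (huniq : ∀ t, t ≤ tbar →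
      (∀ i, i ≠ D.l t → D.rho t (D.l t) < D.rho t i) ∧
      (∀ i, i ≠ D.h t → D.rho t i < D.rho t (D.h t)))
    (hlh0 : ∀ t, t < min tbar (n - 1) → D.l t ≠ D.h 0)
    (hmis : ∀ t, t < tbar → ∃ k, k ≠ D.l t ∧ k ≠ D.h t ∧
      D.P t (D.h t) (D.l t) k ≠ D.G t (D.l t) k) :
    ∀ t, t ≤ tbar → MainInv D t := by
  have hlh0' : ∀ t, t < tbar → D.l t ≠ D.h 0 := fun t ht =>
    hlh0 t (lt_min ht (lt_of_lt_of_le ht htbn))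
  have cnt_max : ∀ (t : ℕ) (i : Fin n), D.cnt t i ≤ D.cnt t (D.h t) :=
    fun t i => (acc_le_acc_iff hn).mp (D.h_max t i)
  have cnt_min : ∀ (t : ℕ) (i : Fin n), D.cnt t (D.l t) ≤ D.cnt t i :=
    fun t i => (acc_le_acc_iff hn).mp (D.l_min t i)
  intro t
  induction t with
  | zero =>
    intro _
    refine ⟨fun r hr => absurd hr (by omega), fun r hr => absurd hr (by omega),
      fun r hr => absurd hr (by omega), fun r hr => absurd hr (by omega),
      ?_, ?_, by omega, Or.inl rfl, fun s hs => absurd hs (by omega)⟩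
    · intro j k
      constructor
      · intro h; rw [D.G_init] at h; exact absurd h (by simp)
      · rintro ⟨r, hr, _⟩; omega
    · simp [Dyn.numLinks, D.G_init]
  | succ t ih =>
    intro ht1
    have htlt : t < tbar := ht1
    have inv := ih (le_of_lt htlt)
    have hlh0t : D.l t ≠ D.h 0 := hlh0' t htlt
    have hlne : D.l t ≠ D.h t := l_ne_h hn D tbar huniq (le_of_lt htlt)
    have hfresh : ∀ q, q < t → D.l t ≠ D.l q := by
      intro q hq
      by_cases hq1 : q + 2 ≤ t
      · exact fresh_settle hn D tbar huniq (le_of_lt htlt) inv q hq1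
      · have hqt : q + 1 = t := by omega
        have hht : D.h t = D.l q := by rw [← hqt]; exact inv.fh q hq
        intro heq; exact hlne (heq.trans hht.symm)
    have hfalse : D.G t (D.l t) (D.h t) = false := by
      cases hGv : D.G t (D.l t) (D.h t) with
      | false => rfl
      | true =>
        exfalso
        obtain ⟨r, hr, hcase⟩ := (inv.fedges _ _).mp hGv
        rcases hcase with ⟨h1, _⟩ | ⟨h1, _⟩
        · exact hfresh r hr h1
        · cases r with
          | zero => exact hlh0t h1
          | succ r' =>
            have hhr := inv.fh r' (by omega)
            rw [hhr] at h1
            exact hfresh r' (by omega) h1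
    have hstep := D.step_add t hfalse (htb2 t htlt)
    have hiff := hstep.1
    have hcopy := hstep.2
    have hGsame_h : ∀ j k : Fin n, j ≠ D.h t → k ≠ D.h t →
        D.G (t+1) j k = D.G t j k := fun j k hj hk =>
      D.Gnext_same hiff (fun hc => hk hc.2) (fun hc => hj hc.1)
    have hcnth : D.cnt (t+1) (D.h t) = D.cnt t (D.h t) := D.cnt_h_eq hlne hGsame_h
    have hcntl : D.cnt (t+1) (D.h t) + 1 ≤ D.cnt (t+1) (D.l t) :=
      D.cnt_l_succ hn hlne hiff hcopy (hmis t htlt)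
    -- the new most accurate agent is l t
    have hle : ∀ i, D.cnt (t+1) i ≤ D.cnt (t+1) (D.l t) := by
      intro i
      by_cases hi : i = D.l t
      · subst hi; exact le_rfl
      · by_cases hih : i = D.h t
        · subst hih; omega
        · have hcu := D.cnt_uninv hlne hfalse hiff hi hih
          have hmaxi : D.cnt t i ≤ D.cnt t (D.h t) := cnt_max t i
          cases hbit : D.P t i (D.l t) (D.h t) with
          | true => have := hcu.1 hbit; omega
          | false => have := hcu.2 hbit; omega
    have hnext : D.h (t+1) = D.l t := by
      by_contra hne
      have h1 := (huniq (t+1) ht1).2 (D.l t) (fun hc => hne hc.symm)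
      have h2 : D.cnt (t+1) (D.l t) < D.cnt (t+1) (D.h (t+1)) := (acc_lt_acc_iff hn).mp h1
      have h3 := hle (D.h (t+1))
      omega
    have hfh0 : D.cnt (t+1) (D.h 0) + 1 ≤ D.cnt 0 (D.h 0) + (t+1) := by
      cases t with
      | zero =>
        have h00 : D.h 0 = D.h 0 := rfl
        have := hcnth
        omega
      | succ u =>
        have hht : D.h (u+1) = D.l u := inv.fh u (by omega)
        have h0ih : D.h 0 ≠ D.h (u+1) := by
          rw [hht]; exact Ne.symm (inv.ffresh1 u (by omega))
        have h0il : D.h 0 ≠ D.l (u+1) := Ne.symm hlh0t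
        have hcu := D.cnt_uninv hlne hfalse hiff h0il h0ih
        have hprev : D.cnt (u+1) (D.h 0) + 1 ≤ D.cnt 0 (D.h 0) + (u+1) := by
          rcases inv.fh0 with h | h
          · omega
          · exact h
        cases hbit : D.P (u+1) (D.h 0) (D.l (u+1)) (D.h (u+1)) with
        | true => have := hcu.1 hbit; omega
        | false => have := hcu.2 hbit; omega
    refine ⟨?_, ?_, ?_, ?_, ?_, ?_, ?_, ?_, ?_⟩
    · intro r hr
      rcases Nat.lt_succ_iff_lt_or_eq.mp hr with hr' | hr'
      · exact inv.fstep r hr'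
      · subst hr'; exact hfalse
    · intro r hr
      rcases Nat.lt_succ_iff_lt_or_eq.mp hr with hr' | hr'
      · exact inv.fh r hr'
      · subst hr'; exact hnext
    · intro r hr
      rcases Nat.lt_succ_iff_lt_or_eq.mp hr with hr' | hr'
      · exact inv.ffresh1 r hr'
      · subst hr'; exact hlh0t
    · intro r hr
      rcases Nat.lt_succ_iff_lt_or_eq.mp hr with hr' | hr'
      · exact inv.ffresh2 r hr'
      · subst hr'; exact hfresh
    · intro j k
      rw [hiff j k]
      constructor
      · rintro (hg | hc | hc)
        · obtain ⟨r, hr, hc⟩ := (inv.fedges j k).mp hg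
          exact ⟨r, by omega, hc⟩
        · exact ⟨t, by omega, Or.inl hc⟩
        · exact ⟨t, by omega, Or.inr hc⟩
      · rintro ⟨r, hr, hc⟩
        rcases Nat.lt_succ_iff_lt_or_eq.mp hr with hr' | hr'
        · exact Or.inl ((inv.fedges j k).mpr ⟨r, hr', hc⟩)
        · subst hr'; exact Or.inr hc
    · rcases hlne.lt_or_gt with hlt | hgt
      · rw [numLinks_flip (D.l t) (D.h t) hlt hfalse (D.Gnext_lh hiff)
          (fun j k hjk hne => D.Gnext_same hiff
            (fun hc => hne (by rw [hc.1, hc.2]))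
            (fun hc => absurd hjk (by rw [hc.1, hc.2]; exact not_lt.mpr hlt.le))),
          inv.fnum]
      · have hfalse' : D.G t (D.h t) (D.l t) = false := by rw [D.G_symm]; exact hfalse
        rw [numLinks_flip (D.h t) (D.l t) hgt hfalse' (D.Gnext_hl hiff)
          (fun j k hjk hne => D.Gnext_same hiff
            (fun hc => absurd hjk (by rw [hc.1, hc.2]; exact not_lt.mpr hgt.le))
            (fun hc => hne (by rw [hc.1, hc.2]))),
          inv.fnum]
    · rw [hnext]
      have := inv.fm
      omega
    · exact Or.inr hfh0
    · intro s hs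
      by_cases hcase : s + 1 = t
      · have hht : D.h t = D.l s := by rw [← hcase]; exact inv.fh s (by omega)
        rw [← hht, hcnth]
        have := inv.fm
        omega
      · have hs2 : s + 2 ≤ t := by omega
        obtain ⟨u, rfl⟩ : ∃ u, t = u + 1 := ⟨t - 1, by omega⟩
        have hht : D.h (u+1) = D.l u := inv.fh u (by omega)
        have hlsl : D.l s ≠ D.l (u+1) := Ne.symm (hfresh s (by omega))
        have hlsh : D.l s ≠ D.h (u+1) := by
          rw [hht]; exact Ne.symm (inv.ffresh2 u (by omega) s (by omega))
        have h0il : D.h 0 ≠ D.l (u+1) := Ne.symm hlh0t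
        have h0ih : D.h 0 ≠ D.h (u+1) := by
          rw [hht]; exact Ne.symm (inv.ffresh1 u (by omega))
        -- both agents perceive the new pair as h 0 did initially
        have hbith0 : D.P (u+1) (D.h 0) (D.l (u+1)) (D.h (u+1)) =
            D.P 0 (D.h 0) (D.l (u+1)) (D.h (u+1)) :=
          D.persist (Ne.symm h0il) (Ne.symm h0ih) (Nat.zero_le _)
            (fun q _ hq => Ne.symm (hlh0' q (by omega)))
        have hbitls : D.P (u+1) (D.l s) (D.l (u+1)) (D.h (u+1)) =
            D.P 0 (D.h 0) (D.l (u+1)) (D.h (u+1)) := by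
          have hpersist : D.P (u+1) (D.l s) (D.l (u+1)) (D.h (u+1)) =
              D.P (s+1) (D.l s) (D.l (u+1)) (D.h (u+1)) :=
            D.persist (Ne.symm hlsl) (Ne.symm hlsh) (by omega)
              (fun q h1 h2 => Ne.symm (inv.ffresh2 q (by omega) s (by omega)))
          rw [hpersist]
          apply D.chain s
          · intro q hq
            constructor
            · exact hfresh q (by omega)
            · rw [hht]; exact inv.ffresh2 u (by omega) q (by omega)
          · intro r hr
            exact (D.step_add r (inv.fstep r (by omega)) (htb2 r (by omega))).2
          · intro r hr
            exact inv.fh r (by omega)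
        have hcu0 := D.cnt_uninv hlne hfalse hiff h0il h0ih
        have hcus := D.cnt_uninv hlne hfalse hiff hlsl hlsh
        have hprev := inv.fsettle s hs2
        cases hbit : D.P 0 (D.h 0) (D.l (u+1)) (D.h (u+1)) with
        | true =>
          have e0 := hcu0.1 (by rw [hbith0]; exact hbit)
          have es := hcus.1 (by rw [hbitls]; exact hbit)
          omega
        | false =>
          have e0 := hcu0.2 (by rw [hbith0]; exact hbit)
          have es := hcus.2 (by rw [hbitls]; exact hbit)
          omega
lemma freezeA (hn : 3 ≤ n) (D : Dyn n c) (tbar : ℕ)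
    (htb1 : D.thr tbar ≤ c)
    (huniq_t : (∀ i, i ≠ D.l tbar → D.rho tbar (D.l tbar) < D.rho tbar i) ∧
      (∀ i, i ≠ D.h tbar → D.rho tbar i < D.rho tbar (D.h tbar)))
    (hfalse : D.G tbar (D.l tbar) (D.h tbar) = false) :
    ∀ s, tbar ≤ s → D.G s = D.G tbar := by
  have key : ∀ k, D.G (tbar + k) = D.G tbar ∧ ∀ i, D.P (tbar + k) i = D.P tbar i := by
    intro k
    induction k with
    | zero => exact ⟨rfl, fun _ => rfl⟩
    | succ k ih =>
      obtain ⟨hG, hP⟩ := ih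
      have hrho : ∀ i, D.rho (tbar + k) i = D.rho tbar i := by
        intro i; unfold Dyn.rho; rw [hG, hP i]
      have hls : D.l (tbar + k) = D.l tbar := by
        by_contra hne
        have h1 := huniq_t.1 (D.l (tbar + k)) hne
        have h2 : D.rho (tbar + k) (D.l (tbar + k)) ≤ D.rho (tbar + k) (D.l tbar) :=
          D.l_min (tbar + k) (D.l tbar)
        have e1 := hrho (D.l (tbar + k))
        have e2 := hrho (D.l tbar)
        linarith
      have hhs : D.h (tbar + k) = D.h tbar := by
        by_contra hne
        have h1 := huniq_t.2 (D.h (tbar + k)) hne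
        have h2 : D.rho (tbar + k) (D.h tbar) ≤ D.rho (tbar + k) (D.h (tbar + k)) :=
          D.h_max (tbar + k) (D.h tbar)
        have e1 := hrho (D.h (tbar + k))
        have e2 := hrho (D.h tbar)
        linarith
      have hfalse' : D.G (tbar + k) (D.l (tbar + k)) (D.h (tbar + k)) = false := by
        rw [hG, hls, hhs]; exact hfalse
      have hthr : ¬ (c < 2 / (n : ℝ) + (1 - 2 / (n : ℝ)) *
          acc n (D.G (tbar + k)) (D.P (tbar + k) (D.h (tbar + k)))
          - acc n (D.G (tbar + k)) (D.P (tbar + k) (D.l (tbar + k)))) := by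
        apply not_lt.mpr
        show 2 / (n : ℝ) + (1 - 2 / (n : ℝ)) * D.rho (tbar + k) (D.h (tbar + k))
          - D.rho (tbar + k) (D.l (tbar + k)) ≤ c
        rw [hls, hhs, hrho, hrho]
        exact htb1
      have hnone := D.step_none (tbar + k) hfalse' hthr
      constructor
      · show D.G (tbar + k + 1) = D.G tbar
        rw [hnone.1, hG]
      · intro i
        show D.P (tbar + k + 1) i = D.P tbar i
        rw [hnone.2 i, hP i]
  intro s hs
  obtain ⟨k, rfl⟩ := Nat.exists_eq_add_of_le hs
  exact (key k).1

lemma freezeB (hn : 3 ≤ n) (D : Dyn n c)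
    (htb1 : D.thr 1 ≤ c)
    (huniq1 : (∀ i, i ≠ D.l 1 → D.rho 1 (D.l 1) < D.rho 1 i) ∧
      (∀ i, i ≠ D.h 1 → D.rho 1 i < D.rho 1 (D.h 1)))
    (hedges1 : ∀ j k, D.G 1 j k = true ↔
      ((j = D.l 0 ∧ k = D.h 0) ∨ (j = D.h 0 ∧ k = D.l 0)))
    (hl1 : D.l 1 = D.h 0) (hh1 : D.h 1 = D.l 0) (hl0h0 : D.l 0 ≠ D.h 0)
    (hcopy0 : ∀ j k, j ≠ D.l 0 → k ≠ D.l 0 → D.P 1 (D.l 0) j k = D.P 0 (D.h 0) j k) :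
    ∀ s, 1 ≤ s → D.G s = D.G 1 := by
  have htrue : D.G 1 (D.l 1) (D.h 1) = true := (hedges1 _ _).mpr (Or.inr ⟨hl1, hh1⟩)
  have hold := D.step_old 1 htrue
  have hG2 : D.G 2 = D.G 1 := hold.1
  have hcopy1 : ∀ j k : Fin n, j ≠ D.h 0 → k ≠ D.h 0 →
      D.P 2 (D.h 0) j k = D.P 1 (D.l 0) j k := by
    intro j k hj hk
    have := hold.2 j k (by rw [hl1]; exact hj) (by rw [hl1]; exact hk)
    rw [hl1, hh1] at this
    exact this
  have hP2 : ∀ i : Fin n, i ≠ D.h 0 → ∀ j k, D.P 2 i j k = D.P 1 i j k := by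
    intro i hi
    exact D.P_uninv (t := 1) (by rw [hl1]; exact hi) (fun k => by rw [hG2])
  have cnt2 : ∀ i : Fin n, i ≠ D.h 0 → D.cnt 2 i = D.cnt 1 i := by
    intro i hi
    apply agr_congr
    intro j k _
    rw [hP2 i hi j k, hG2]
  -- the top count
  have hGedge : ∀ j k : Fin n, j ≠ D.l 0 → k ≠ D.l 0 → D.G 1 j k = false := by
    intro j k hj hk
    cases hGv : D.G 1 j k with
    | false => rfl
    | true =>
      exfalso
      rcases (hedges1 j k).mp hGv with ⟨h1, _⟩ | ⟨_, h2⟩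
      · exact hj h1
      · exact hk h2
  have hcnt2h0 : D.cnt 2 (D.h 0) = D.cnt 1 (D.l 0) := by
    have e1 : D.cnt 2 (D.h 0) = agrWith n (D.h 0) (D.G 2) (D.P 2 (D.h 0)) +
        agrAway n (D.h 0) (D.G 2) (D.P 2 (D.h 0)) := agr_split _ _ _
    have e2 : D.cnt 1 (D.l 0) = agrWith n (D.h 0) (D.G 1) (D.P 1 (D.l 0)) +
        agrAway n (D.h 0) (D.G 1) (D.P 1 (D.l 0)) := agr_split _ _ _
    have eW1 : agrWith n (D.h 0) (D.G 2) (D.P 2 (D.h 0)) = n - 1 :=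
      agrWith_eq hn _ (fun j k _ h => D.own 2 (D.h 0) j k h)
    have eW2 : agrWith n (D.h 0) (D.G 1) (D.P 1 (D.l 0)) = n - 1 := by
      apply agrWith_eq hn
      intro j k hjk hor
      by_cases hl : j = D.l 0 ∨ k = D.l 0
      · exact D.own 1 (D.l 0) j k hl
      · push_neg at hl
        rw [hcopy0 j k hl.1 hl.2, D.own 0 (D.h 0) j k hor, D.G_init,
          hGedge j k hl.1 hl.2]
    have eA : agrAway n (D.h 0) (D.G 2) (D.P 2 (D.h 0)) =
        agrAway n (D.h 0) (D.G 1) (D.P 1 (D.l 0)) := by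
      apply agrAway_congr
      intro j k _ hj hk
      rw [hcopy1 j k hj hk, hG2]
    omega
  have hlt2 : ∀ i : Fin n, i ≠ D.l 0 → i ≠ D.h 0 → D.cnt 2 i < D.cnt 1 (D.l 0) := by
    intro i h1 h2
    rw [cnt2 i h2]
    have := (acc_lt_acc_iff hn).mp (huniq1.2 i (by rw [hh1]; exact h1))
    rw [hh1] at this
    exact this
  have hcnt2l0 : D.cnt 2 (D.l 0) = D.cnt 1 (D.l 0) := cnt2 _ hl0h0
  have hub2 : ∀ i : Fin n, D.cnt 2 i ≤ D.cnt 1 (D.l 0) := by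
    intro i
    by_cases h1 : i = D.l 0
    · subst h1; omega
    · by_cases h2 : i = D.h 0
      · subst h2; omega
      · exact le_of_lt (hlt2 i h1 h2)
  have hmin2 : ∀ i : Fin n, D.cnt 1 (D.l 1) ≤ D.cnt 2 i := by
    intro i
    by_cases hi : i = D.h 0
    · subst hi
      rw [hcnt2h0]
      exact (acc_le_acc_iff hn).mp (D.l_min 1 (D.l 0))
    · rw [cnt2 i hi]
      exact (acc_le_acc_iff hn).mp (D.l_min 1 i)
  obtain ⟨w, hw1, hw2⟩ : ∃ w : Fin n, w ≠ D.l 0 ∧ w ≠ D.h 0 := by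
    have h2 : ({D.l 0, D.h 0} : Finset (Fin n)).card ≤ 2 :=
      le_trans (Finset.card_insert_le _ _) (by simp)
    have h3 : 0 < (({D.l 0, D.h 0} : Finset (Fin n))ᶜ).card := by
      rw [Finset.card_compl]
      simp only [Fintype.card_fin]
      omega
    obtain ⟨w, hw⟩ := Finset.card_pos.mp h3
    rw [Finset.mem_compl, Finset.mem_insert, Finset.mem_singleton] at hw
    push_neg at hw
    exact ⟨w, hw.1, hw.2⟩
  have key : ∀ k, D.G (2 + k) = D.G 1 ∧ ∀ i, D.P (2 + k) i = D.P 2 i := by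
    intro k
    induction k with
    | zero => exact ⟨hG2, fun _ => rfl⟩
    | succ k ih =>
      obtain ⟨hG, hP⟩ := ih
      have hcnts : ∀ i, D.cnt (2 + k) i = D.cnt 2 i := by
        intro i
        show agr n (D.G (2 + k)) (D.P (2 + k) i) = agr n (D.G 2) (D.P 2 i)
        rw [hG, ← hG2, hP i]
      have hhub : D.cnt (2 + k) (D.l 0) ≤ D.cnt (2 + k) (D.h (2 + k)) :=
        (acc_le_acc_iff hn).mp (D.h_max (2 + k) (D.l 0))
      rw [hcnts (D.l 0), hcnt2l0] at hhub
      have hhsm : D.h (2 + k) = D.l 0 ∨ D.h (2 + k) = D.h 0 := by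
        by_contra hc
        push_neg at hc
        have := hlt2 (D.h (2 + k)) hc.1 hc.2
        have h2 := hcnts (D.h (2 + k))
        omega
      have hcnthk : D.cnt (2 + k) (D.h (2 + k)) = D.cnt 1 (D.l 0) := by
        rcases hhsm with h | h <;> rw [hcnts, h] <;> omega
      have hlsm : D.l (2 + k) ≠ D.l 0 ∧ D.l (2 + k) ≠ D.h 0 := by
        have hwlt : D.cnt (2 + k) (D.l (2 + k)) ≤ D.cnt (2 + k) w :=
          (acc_le_acc_iff hn).mp (D.l_min (2 + k) w)
        have hwv := hlt2 w hw1 hw2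
        have h1 := hcnts w
        have h2 := hcnts (D.l (2 + k))
        constructor <;> intro hc <;> rw [hc] at hwlt h2 <;> omega
      have hGf : D.G (2 + k) (D.l (2 + k)) (D.h (2 + k)) = false := by
        rw [hG]
        cases hGv : D.G 1 (D.l (2 + k)) (D.h (2 + k)) with
        | false => rfl
        | true =>
          exfalso
          rcases (hedges1 _ _).mp hGv with ⟨h1, _⟩ | ⟨h1, _⟩
          · exact hlsm.1 h1
          · exact hlsm.2 h1
      have hthr : ¬ (c < 2 / (n : ℝ) + (1 - 2 / (n : ℝ)) *
          acc n (D.G (2 + k)) (D.P (2 + k) (D.h (2 + k)))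
          - acc n (D.G (2 + k)) (D.P (2 + k) (D.l (2 + k)))) := by
        apply not_lt.mpr
        show 2 / (n : ℝ) + (1 - 2 / (n : ℝ)) * D.rho (2 + k) (D.h (2 + k))
          - D.rho (2 + k) (D.l (2 + k)) ≤ c
        have eH : D.rho (2 + k) (D.h (2 + k)) = D.rho 1 (D.h 1) := by
          apply D.rho_eq_of_cnt hn
          rw [hcnthk, hh1]
        have eL : D.rho 1 (D.l 1) ≤ D.rho (2 + k) (D.l (2 + k)) := by
          rw [D.rho_le_iff hn, hcnts]
          exact hmin2 _
        have htb1' : 2 / (n : ℝ) + (1 - 2 / (n : ℝ)) * D.rho 1 (D.h 1)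
            - D.rho 1 (D.l 1) ≤ c := htb1
        rw [eH]
        linarith
      have hnone := D.step_none (2 + k) hGf hthr
      constructor
      · show D.G (2 + k + 1) = D.G 1
        rw [hnone.1, hG]
      · intro i
        show D.P (2 + k + 1) i = D.P 2 i
        rw [hnone.2 i, hP i]
  intro s hs
  by_cases h1 : s = 1
  · rw [h1]
  · obtain ⟨k, rfl⟩ : ∃ k, s = 2 + k := ⟨s - 2, by omega⟩
    exact (key k).1
/-- Proposition 3, part 2: with `0 ≤ c < c₀`, if `t̄ ≤ n−1` is the least period with
`c_{t̄} ≤ c`, and along the way minimizers/maximizers are unique, `l_t ≠ h_0` for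
`t < min(t̄, n−1)`, and the chosen most accurate agent misperceives some link state of the
updater with a third party, then exactly one link is added at each period `t < t̄`, the
network never changes from period `t̄` on, and the steady-state network has exactly `t̄`
links. -/
theorem stmt12 (n : ℕ) (hn : 3 ≤ n) (c : ℝ) (hc0 : 0 ≤ c) (D : Dyn n c)
    (hclt : c < 2 / (n : ℝ) + (1 - 2 / (n : ℝ)) *
        ((Finset.univ : Finset (Fin n)).sup'
          ⟨⟨0, Nat.lt_of_lt_of_le (Nat.succ_pos 2) hn⟩, Finset.mem_univ _⟩
          fun i => D.rho 0 i)
      - ((Finset.univ : Finset (Fin n)).inf'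
          ⟨⟨0, Nat.lt_of_lt_of_le (Nat.succ_pos 2) hn⟩, Finset.mem_univ _⟩
          fun i => D.rho 0 i))
    (tbar : ℕ) (htb1 : D.thr tbar ≤ c) (htb2 : ∀ s, s < tbar → c < D.thr s)
    (htbn : tbar ≤ n - 1)
    (huniq : ∀ t, t ≤ tbar →
      (∀ i, i ≠ D.l t → D.rho t (D.l t) < D.rho t i) ∧
      (∀ i, i ≠ D.h t → D.rho t i < D.rho t (D.h t)))
    (hlh0 : ∀ t, t < min tbar (n - 1) → D.l t ≠ D.h 0)
    (hmis : ∀ t, t < tbar → ∃ k, k ≠ D.l t ∧ k ≠ D.h t ∧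
      D.P t (D.h t) (D.l t) k ≠ D.G t (D.l t) k) :
    (∀ t, t < tbar → Dyn.numLinks (D.G (t + 1)) = Dyn.numLinks (D.G t) + 1) ∧
    (∀ s, tbar ≤ s → D.G s = D.G tbar) ∧
    Dyn.numLinks (D.G tbar) = tbar := by
  have hmain := main_inv hn D tbar htb2 htbn huniq hlh0 hmis
  have invT := hmain tbar le_rfl
  refine ⟨?_, ?_, invT.fnum⟩
  · intro t ht
    have h1 := (hmain (t+1) (by omega)).fnum
    have h2 := (hmain t (by omega)).fnum
    omega
  · cases hGv : D.G tbar (D.l tbar) (D.h tbar) with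
    | false => exact freezeA hn D tbar htb1 (huniq tbar le_rfl) hGv
    | true =>
      -- adjacency at t̄ is only possible when t̄ = 1, l₁ = h₀, h₁ = l₀
      obtain ⟨r, hr, hcase⟩ := (invT.fedges _ _).mp hGv
      have hlneT : D.l tbar ≠ D.h tbar := l_ne_h hn D tbar huniq le_rfl
      have hfreshT : ∀ q, q + 2 ≤ tbar → D.l tbar ≠ D.l q :=
        fresh_settle hn D tbar huniq le_rfl invT
      obtain ⟨v, rfl⟩ : ∃ v, tbar = v + 1 := ⟨tbar - 1, by omega⟩
      have hht : D.h (v+1) = D.l v := invT.fh v (by omega)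
      have hB : v = 0 ∧ D.l 1 = D.h 0 := by
        rcases hcase with ⟨h1, _⟩ | ⟨h1, h2⟩
        · -- l t̄ = l r
          exfalso
          by_cases hr2 : r + 2 ≤ v + 1
          · exact hfreshT r hr2 h1
          · have hrv : r = v := by omega
            subst hrv
            exact hlneT (h1.trans hht.symm)
          -- l t̄ = h r, h t̄ = l r
        · have hrv : r = v := by
            by_contra hne
            have hrv' : r < v := by omega
            have := invT.ffresh2 v (by omega) r hrv'
            rw [hht] at h2
            exact this h2
          rw [hrv] at h1
          cases v with
          | zero => exact ⟨rfl, h1⟩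
          | succ u =>
            exfalso
            have hhu : D.h (u+1) = D.l u := invT.fh u (by omega)
            rw [hhu] at h1
            exact hfreshT u (by omega) h1
      obtain ⟨rfl, hl1⟩ := hB
      have hedges1 : ∀ j k, D.G 1 j k = true ↔
          ((j = D.l 0 ∧ k = D.h 0) ∨ (j = D.h 0 ∧ k = D.l 0)) := by
        intro j k
        rw [invT.fedges j k]
        constructor
        · rintro ⟨r, hr', hc⟩
          have : r = 0 := by omega
          subst this
          exact hc
        · intro hc
          exact ⟨0, by omega, hc⟩
      exact freezeB hn D htb1 (huniq 1 le_rfl) hedges1 hl1 hht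
        (invT.ffresh1 0 (by omega))
        (D.step_add 0 (invT.fstep 0 (by omega)) (htb2 0 (by omega))).2
end

section
/- (Proposition 3, part 3.) Consider the dynamics with cost c ≥ 0 such that c < c_t for every period t ≤ n−2. Assume that for every t ≤ n−2 the least and most accurate agents are unique, that l_t ≠ h_0, and that P^{h_t}_t(l_t,k) ≠ G_t(l_t,k) for some k ∉ {l_t,h_t}. Then a link is added at every period t = 0, 1, …, n−2, so that G_{n−1} contains exactly n−1 links; consequently any steady-state network contains at least n−1 links. -/
open Finset

section Aux

lemma bool_eq_of_iff {a b : Bool} (h : (a = true) ↔ (b = true)) : a = b := by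
  cases a <;> cases b <;> simp_all

lemma exists_ne_fin {n : ℕ} (hn : 3 ≤ n) (x : Fin n) : ∃ y : Fin n, y ≠ x := by
  have : Nontrivial (Fin n) := Fin.nontrivial_iff_two_le.mpr (by omega)
  exact exists_ne x

end Aux

namespace Dyn

variable {n : ℕ} {c : ℝ} (D : Dyn n c)

/-- The agreement set of agent `i` at period `t`. -/
def Agr (t : ℕ) (i : Fin n) : Finset (Fin n × Fin n) :=
  (Finset.univ : Finset (Fin n × Fin n)).filter fun pr =>
    pr.1 < pr.2 ∧ D.P t i pr.1 pr.2 = D.G t pr.1 pr.2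

lemma mem_Agr {t : ℕ} {i : Fin n} {pr : Fin n × Fin n} :
    pr ∈ D.Agr t i ↔ pr.1 < pr.2 ∧ D.P t i pr.1 pr.2 = D.G t pr.1 pr.2 := by
  simp [Agr]

lemma rho_eq (t : ℕ) (i : Fin n) :
    D.rho t i = ((D.Agr t i).card : ℝ) / ((n : ℝ) * ((n : ℝ) - 1) / 2) := rfl

lemma Mpos (hn : 3 ≤ n) : (0 : ℝ) < (n : ℝ) * ((n : ℝ) - 1) / 2 := by
  have h3 : (3 : ℝ) ≤ (n : ℝ) := by exact_mod_cast hn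
  nlinarith

lemma rho_lt_of_card_lt (hn : 3 ≤ n) {t t' : ℕ} {i j : Fin n}
    (h : (D.Agr t i).card < (D.Agr t' j).card) : D.rho t i < D.rho t' j := by
  rw [rho_eq, rho_eq]
  exact div_lt_div_of_pos_right (by exact_mod_cast h) (Mpos hn)

lemma card_lt_of_rho_lt (hn : 3 ≤ n) {t t' : ℕ} {i j : Fin n}
    (h : D.rho t i < D.rho t' j) : (D.Agr t i).card < (D.Agr t' j).card := by
  by_contra hle
  push_neg at hle
  have h2 : D.rho t' j ≤ D.rho t i := by
    rw [rho_eq, rho_eq]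
    exact div_le_div_of_nonneg_right (by exact_mod_cast hle) (Mpos hn).le
  linarith

lemma G_step_ne {t : ℕ}
    (hiff : ∀ j k, D.G (t+1) j k = true ↔
      (D.G t j k = true ∨ (j = D.l t ∧ k = D.h t) ∨ (j = D.h t ∧ k = D.l t)))
    {j k : Fin n} (h1 : ¬(j = D.l t ∧ k = D.h t)) (h2 : ¬(j = D.h t ∧ k = D.l t)) :
    D.G (t+1) j k = D.G t j k :=
  bool_eq_of_iff (by rw [hiff]; tauto)

/-- After a link is added at period `s`, the updater `l s` is the unique most
accurate agent at period `s+1`. -/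
lemma post_max (hn : 3 ≤ n) (s : ℕ)
    (hGf : D.G s (D.l s) (D.h s) = false)
    (hcost : c < D.thr s)
    (hu : ∀ i, i ≠ D.h s → D.rho s i < D.rho s (D.h s))
    (hm : ∃ k, k ≠ D.l s ∧ k ≠ D.h s ∧ D.P s (D.h s) (D.l s) k ≠ D.G s (D.l s) k)
    (hlh : D.l s ≠ D.h s) :
    ∀ i, i ≠ D.l s → D.rho (s+1) i < D.rho (s+1) (D.l s) := by
  obtain ⟨hiff, hcopy⟩ := D.step_add s hGf hcost
  have hGne : ∀ j k : Fin n, ¬(j = D.l s ∧ k = D.h s) → ¬(j = D.h s ∧ k = D.l s) →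
      D.G (s+1) j k = D.G s j k := fun j k h1 h2 => D.G_step_ne hiff h1 h2
  -- (c1) : the accuracy count of `h s` is unchanged
  have key : ∀ j k : Fin n,
      (D.P (s+1) (D.h s) j k = D.G (s+1) j k) ↔ (D.P s (D.h s) j k = D.G s j k) := by
    intro j k
    by_cases hj : j = D.h s
    · subst hj
      rw [D.own_correct, D.own_correct]
      simp
    · by_cases hk : k = D.h s
      · subst hk
        have e1 : D.P (s+1) (D.h s) j (D.h s) = D.G (s+1) (D.h s) j := by
          rw [D.P_symm, D.own_correct]
        have e2 : D.P s (D.h s) j (D.h s) = D.G s (D.h s) j := by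
          rw [D.P_symm, D.own_correct]
        rw [e1, e2]
        exact iff_of_true (D.G_symm _ _ _) (D.G_symm _ _ _)
      · rw [D.keep s (D.h s) (Ne.symm hlh) j k hj hk,
          hGne j k (fun hh => hk hh.2) (fun hh => hj hh.1)]
  have hAH : D.Agr (s+1) (D.h s) = D.Agr s (D.h s) := by
    ext pr
    simp only [mem_Agr, key]
  -- (c2a) : every non-updater gains at most one correct pair
  have hup : ∀ i, i ≠ D.l s → (D.Agr (s+1) i).card ≤ (D.Agr s i).card + 1 := by
    intro i hi
    have horder : ∀ a b : Fin n, a < b →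
        ((a = D.l s ∧ b = D.h s) ∨ (a = D.h s ∧ b = D.l s)) →
        (D.Agr (s+1) i).card ≤ (D.Agr s i).card + 1 := by
      intro a b hab hor
      have hsub : D.Agr (s+1) i ⊆ insert (a, b) (D.Agr s i) := by
        intro pr hpr
        rw [mem_Agr] at hpr
        obtain ⟨hlt, hPG⟩ := hpr
        rw [Finset.mem_insert]
        by_cases hpe : pr = (a, b)
        · exact Or.inl hpe
        · right
          rw [mem_Agr]
          refine ⟨hlt, ?_⟩
          by_cases hj : pr.1 = i
          · rw [hj, D.own_correct]
          · by_cases hk : pr.2 = i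
            · rw [hk, D.P_symm, D.own_correct]
              exact D.G_symm _ _ _
            · have hP : D.P (s+1) i pr.1 pr.2 = D.P s i pr.1 pr.2 :=
                D.keep s i hi pr.1 pr.2 hj hk
              have hG : D.G (s+1) pr.1 pr.2 = D.G s pr.1 pr.2 := by
                apply hGne
                · rintro ⟨h1, h2⟩
                  rcases hor with ⟨ha, hb⟩ | ⟨ha, hb⟩
                  · exact hpe (Prod.ext (h1.trans ha.symm) (h2.trans hb.symm))
                  · rw [h1, h2] at hlt
                    rw [ha, hb] at hab
                    exact absurd hab (lt_asymm hlt)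
                · rintro ⟨h1, h2⟩
                  rcases hor with ⟨ha, hb⟩ | ⟨ha, hb⟩
                  · rw [h1, h2] at hlt
                    rw [ha, hb] at hab
                    exact absurd hab (lt_asymm hlt)
                  · exact hpe (Prod.ext (h1.trans ha.symm) (h2.trans hb.symm))
              rw [← hP, ← hG]
              exact hPG
      calc (D.Agr (s+1) i).card ≤ (insert (a, b) (D.Agr s i)).card :=
            Finset.card_le_card hsub
        _ ≤ (D.Agr s i).card + 1 := Finset.card_insert_le _ _
    rcases lt_or_gt_of_ne hlh with h1 | h1
    · exact horder _ _ h1 (Or.inl ⟨rfl, rfl⟩)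
    · exact horder _ _ h1 (Or.inr ⟨rfl, rfl⟩)
  -- (c2b) : the updater strictly beats the count of `h s`
  have hLlow : (D.Agr s (D.h s)).card + 1 ≤ (D.Agr (s+1) (D.l s)).card := by
    obtain ⟨k₀, hk₀l, hk₀h, hk₀⟩ := hm
    have horder : ∀ a b : Fin n, a < b →
        ((a = D.l s ∧ b = k₀) ∨ (a = k₀ ∧ b = D.l s)) →
        (D.Agr s (D.h s)).card + 1 ≤ (D.Agr (s+1) (D.l s)).card := by
      intro a b hab hor
      have hmemL : (a, b) ∈ D.Agr (s+1) (D.l s) := by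
        rw [mem_Agr]
        refine ⟨hab, ?_⟩
        rcases hor with ⟨ha, hb⟩ | ⟨ha, hb⟩
        · rw [ha, D.own_correct]
        · rw [hb, D.P_symm, D.own_correct]
          exact D.G_symm _ _ _
      have hnot : (a, b) ∉ D.Agr s (D.h s) := by
        rw [mem_Agr]
        rintro ⟨-, hPG⟩
        rcases hor with ⟨ha, hb⟩ | ⟨ha, hb⟩
        · rw [ha, hb] at hPG
          exact hk₀ hPG
        · rw [ha, hb, D.P_symm, D.G_symm] at hPG
          exact hk₀ hPG
      have hsub : insert (a, b) (D.Agr s (D.h s)) ⊆ D.Agr (s+1) (D.l s) := by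
        rw [Finset.insert_subset_iff]
        refine ⟨hmemL, ?_⟩
        intro pr hpr
        rw [mem_Agr] at hpr ⊢
        obtain ⟨hlt, hPG⟩ := hpr
        refine ⟨hlt, ?_⟩
        by_cases hj : pr.1 = D.l s
        · rw [hj, D.own_correct]
        · by_cases hk : pr.2 = D.l s
          · rw [hk, D.P_symm, D.own_correct]
            exact D.G_symm _ _ _
          · rw [hcopy pr.1 pr.2 hj hk, hPG]
            exact (hGne pr.1 pr.2 (fun hh => hj hh.1) (fun hh => hk hh.2)).symm
      calc (D.Agr s (D.h s)).card + 1
          = (insert (a, b) (D.Agr s (D.h s))).card :=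
            (Finset.card_insert_of_notMem hnot).symm
        _ ≤ (D.Agr (s+1) (D.l s)).card := Finset.card_le_card hsub
    rcases lt_or_gt_of_ne (Ne.symm hk₀l) with h1 | h1
    · exact horder _ _ h1 (Or.inl ⟨rfl, rfl⟩)
    · exact horder _ _ h1 (Or.inr ⟨rfl, rfl⟩)
  intro i hi
  apply D.rho_lt_of_card_lt hn
  by_cases hiH : i = D.h s
  · subst hiH
    rw [hAH]
    omega
  · have h1 := hup i hi
    have h2 : (D.Agr s i).card < (D.Agr s (D.h s)).card :=
      D.card_lt_of_rho_lt hn (hu i hiH)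
    omega

/-- Adding a fresh link increments the number of links. -/
lemma numLinks_step {s : ℕ} (hGf : D.G s (D.l s) (D.h s) = false) (hlh : D.l s ≠ D.h s)
    (hiff : ∀ j k, D.G (s+1) j k = true ↔
      (D.G s j k = true ∨ (j = D.l s ∧ k = D.h s) ∨ (j = D.h s ∧ k = D.l s))) :
    Dyn.numLinks (D.G (s+1)) = Dyn.numLinks (D.G s) + 1 := by
  have horder : ∀ a b : Fin n, a < b →
      ((a = D.l s ∧ b = D.h s) ∨ (a = D.h s ∧ b = D.l s)) →
      Dyn.numLinks (D.G (s+1)) = Dyn.numLinks (D.G s) + 1 := by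
    intro a b hab hor
    have hGab : D.G s a b = false := by
      rcases hor with ⟨ha, hb⟩ | ⟨ha, hb⟩
      · rw [ha, hb]; exact hGf
      · rw [ha, hb, D.G_symm]; exact hGf
    have hset : ((Finset.univ : Finset (Fin n × Fin n)).filter fun pr =>
          pr.1 < pr.2 ∧ D.G (s+1) pr.1 pr.2 = true)
        = insert (a, b) ((Finset.univ : Finset (Fin n × Fin n)).filter fun pr =>
          pr.1 < pr.2 ∧ D.G s pr.1 pr.2 = true) := by
      ext pr
      simp only [Finset.mem_insert, Finset.mem_filter, Finset.mem_univ, true_and]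
      constructor
      · rintro ⟨hlt, hG⟩
        rcases (hiff pr.1 pr.2).mp hG with hold | ⟨h1, h2⟩ | ⟨h1, h2⟩
        · exact Or.inr ⟨hlt, hold⟩
        · rcases hor with ⟨ha, hb⟩ | ⟨ha, hb⟩
          · exact Or.inl (Prod.ext (h1.trans ha.symm) (h2.trans hb.symm))
          · exfalso
            rw [h1, h2] at hlt
            rw [ha, hb] at hab
            exact absurd hab (lt_asymm hlt)
        · rcases hor with ⟨ha, hb⟩ | ⟨ha, hb⟩
          · exfalso
            rw [h1, h2] at hlt
            rw [ha, hb] at hab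
            exact absurd hab (lt_asymm hlt)
          · exact Or.inl (Prod.ext (h1.trans ha.symm) (h2.trans hb.symm))
      · rintro (hpe | ⟨hlt, hG⟩)
        · subst hpe
          exact ⟨hab, (hiff a b).mpr (Or.inr hor)⟩
        · exact ⟨hlt, (hiff pr.1 pr.2).mpr (Or.inl hG)⟩
    have hnotmem : (a, b) ∉ ((Finset.univ : Finset (Fin n × Fin n)).filter fun pr =>
        pr.1 < pr.2 ∧ D.G s pr.1 pr.2 = true) := by
      simp [Finset.mem_filter, hGab]
    unfold Dyn.numLinks
    rw [hset, Finset.card_insert_of_notMem hnotmem]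
  rcases lt_or_gt_of_ne hlh with h1 | h1
  · exact horder _ _ h1 (Or.inl ⟨rfl, rfl⟩)
  · exact horder _ _ h1 (Or.inr ⟨rfl, rfl⟩)

end Dyn

/-- Proposition 3, part 3: if `c < c_t` for every period `t ≤ n−2` (with unique
minimizers/maximizers, `l_t ≠ h_0`, and a misperceived third-party link state of the
updater at each such period), then a link is added at every period `t ≤ n−2`, so `G_{n−1}`
has exactly `n−1` links; consequently any steady-state network has at least `n−1` links. -/
theorem stmt13 (n : ℕ) (hn : 3 ≤ n) (c : ℝ) (hc0 : 0 ≤ c) (D : Dyn n c)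
    (hc : ∀ t, t ≤ n - 2 → c < D.thr t)
    (huniq : ∀ t, t ≤ n - 2 →
      (∀ i, i ≠ D.l t → D.rho t (D.l t) < D.rho t i) ∧
      (∀ i, i ≠ D.h t → D.rho t i < D.rho t (D.h t)))
    (hlh0 : ∀ t, t ≤ n - 2 → D.l t ≠ D.h 0)
    (hmis : ∀ t, t ≤ n - 2 → ∃ k, k ≠ D.l t ∧ k ≠ D.h t ∧
      D.P t (D.h t) (D.l t) k ≠ D.G t (D.l t) k) :
    (∀ t, t ≤ n - 2 → Dyn.numLinks (D.G (t + 1)) = Dyn.numLinks (D.G t) + 1) ∧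
    Dyn.numLinks (D.G (n - 1)) = n - 1 ∧
    (∀ t, (∀ s, t ≤ s → D.G s = D.G t) → n - 1 ≤ Dyn.numLinks (D.G t)) := by
  -- the least and most accurate agents are distinct
  have lt_ne_ht : ∀ t, t ≤ n - 2 → D.l t ≠ D.h t := by
    intro t ht heq
    obtain ⟨hu1, hu2⟩ := huniq t ht
    obtain ⟨i, hi⟩ := exists_ne_fin hn (D.l t)
    have h1 := hu1 i hi
    have h2 := hu2 i (by rw [← heq]; exact hi)
    rw [← heq] at h2
    linarith
  -- when the pair is unlinked, a link is added
  have hstep : ∀ t, t ≤ n - 2 → D.G t (D.l t) (D.h t) = false →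
      ((∀ j k, D.G (t+1) j k = true ↔
          (D.G t j k = true ∨ (j = D.l t ∧ k = D.h t) ∨ (j = D.h t ∧ k = D.l t))) ∧
        ∀ j k, j ≠ D.l t → k ≠ D.l t → D.P (t+1) (D.l t) j k = D.P t (D.h t) j k) := by
    intro t ht hf
    exact D.step_add t hf (hc t ht)
  -- main invariant, by strong induction
  have KEY : ∀ t, t ≤ n - 2 →
      (D.G t (D.l t) (D.h t) = false ∧ (∀ s, s < t → D.l t ≠ D.l s) ∧
        (∀ s, t = s + 1 → D.h t = D.l s)) := by
    intro t
    induction t using Nat.strong_induction_on with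
    | _ t IH =>
    intro ht
    -- part (iii) : the most accurate agent is the previous updater
    have part3 : ∀ s, t = s + 1 → D.h t = D.l s := by
      intro s hs
      subst hs
      have hsle : s ≤ n - 2 := by omega
      obtain ⟨hGf, -, -⟩ := IH s (by omega) hsle
      have hmax := D.post_max hn s hGf (hc s hsle) ((huniq s hsle).2)
        (hmis s hsle) (lt_ne_ht s hsle)
      by_contra hne
      have h1 : D.rho (s+1) (D.l s) ≤ D.rho (s+1) (D.h (s+1)) := D.h_max (s+1) (D.l s)
      have h2 := hmax (D.h (s+1)) hne
      linarith
    -- part (ii) : the updater is always new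
    have part2 : ∀ s, s < t → D.l t ≠ D.l s := by
      intro s hst heq
      have ht1 : 1 ≤ t := by omega
      have hht : D.h t = D.l (t-1) := part3 (t-1) (by omega)
      by_cases hs_eq : s = t - 1
      · exact lt_ne_ht t ht (by rw [heq, hs_eq, ← hht])
      · have hslt : s < t - 1 := by omega
        have core : ∀ d, s + 1 + d ≤ t →
            ∀ k, k ≠ D.l s → k ≠ D.l (s + d) →
              D.P (s+1+d) (D.l (s+d)) (D.l s) k = D.G (s+1+d) (D.l s) k := by
          intro d
          induction d with
          | zero =>
            intro _ k hk1 _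
            simpa using D.own_correct (s+1) (D.l s) k
          | succ d ihd =>
            intro hle k hk1 hk2
            have e2 : s + (d + 1) = s + 1 + d := by omega
            rw [e2] at hk2
            have e1 : s + 1 + (d + 1) = (s + 1 + d) + 1 := by omega
            rw [e1, e2]
            have hrlt : s + 1 + d < t := by omega
            have hrle : s + 1 + d ≤ n - 2 := by omega
            obtain ⟨hGfr, hinjr, hpart3r⟩ := IH (s+1+d) hrlt hrle
            obtain ⟨hiffr, hcopyr⟩ := hstep (s+1+d) hrle hGfr
            have hlr_ne : D.l s ≠ D.l (s+1+d) := fun hh => hinjr s (by omega) hh.symm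
            have hhr : D.h (s+1+d) = D.l (s + d) := hpart3r (s + d) (by omega)
            rw [hcopyr (D.l s) k hlr_ne hk2, hhr]
            by_cases hkld : k = D.l (s + d)
            · subst hkld
              rw [D.P_symm, D.own_correct, D.G_symm (s+1+d) (D.l (s+d)) (D.l s)]
              exact (D.G_step_ne hiffr (fun hh => hlr_ne hh.1)
                (fun hh => hinjr (s+d) (by omega) hh.2.symm)).symm
            · rw [ihd (by omega) k hk1 hkld]
              exact (D.G_step_ne hiffr (fun hh => hlr_ne hh.1)
                (fun hh => hk2 hh.2)).symm
        obtain ⟨k₀, hk₀l, hk₀h, hk₀⟩ := hmis t ht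
        have hd : s + 1 + (t - 1 - s) = t := by omega
        have hd2 : s + (t - 1 - s) = t - 1 := by omega
        have hcore := core (t - 1 - s) (by omega) k₀
          (by rw [← heq]; exact hk₀l)
          (by rw [hd2, ← hht]; exact hk₀h)
        rw [hd, hd2, ← hht, ← heq] at hcore
        exact hk₀ hcore
    -- part (i) : the chosen pair is unlinked
    have part1 : D.G t (D.l t) (D.h t) = false := by
      rcases Nat.eq_zero_or_pos t with h0 | hpos
      · subst h0; exact D.G_init _ _
      · by_contra hTrue
        rw [Bool.not_eq_false] at hTrue
        have hchar : ∀ u, u ≤ t → ∀ j k, D.G u j k = true →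
            ∃ q, q < u ∧ ((j = D.l q ∧ k = D.h q) ∨ (j = D.h q ∧ k = D.l q)) := by
          intro u
          induction u with
          | zero =>
            intro _ j k hjk
            rw [D.G_init] at hjk
            simp at hjk
          | succ u ihu =>
            intro hu j k hjk
            have hult : u < t := by omega
            obtain ⟨hGfu, -, -⟩ := IH u hult (by omega)
            obtain ⟨hiffu, -⟩ := hstep u (by omega) hGfu
            rcases (hiffu j k).mp hjk with hold | hnew
            · obtain ⟨q, hq, hqe⟩ := ihu (by omega) j k hold
              exact ⟨q, by omega, hqe⟩
            · exact ⟨u, by omega, hnew⟩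
        obtain ⟨q, hqt, hqe⟩ := hchar t le_rfl _ _ hTrue
        rcases hqe with ⟨he1, -⟩ | ⟨he1, -⟩
        · exact part2 q hqt he1
        · rcases Nat.eq_zero_or_pos q with hq0 | hqpos
          · subst hq0; exact hlh0 t ht he1
          · obtain ⟨-, -, hp3⟩ := IH q hqt (by omega)
            have hq3 : D.h q = D.l (q-1) := hp3 (q-1) (by omega)
            exact part2 (q-1) (by omega) (he1.trans hq3)
    exact ⟨part1, part2, part3⟩
  -- conclusion 1
  have out1 : ∀ t, t ≤ n - 2 → Dyn.numLinks (D.G (t + 1)) = Dyn.numLinks (D.G t) + 1 := by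
    intro t ht
    obtain ⟨hGf, -, -⟩ := KEY t ht
    obtain ⟨hiff, -⟩ := hstep t ht hGf
    exact D.numLinks_step hGf (lt_ne_ht t ht) hiff
  -- conclusion 2
  have hcount : ∀ u, u ≤ n - 1 → Dyn.numLinks (D.G u) = u := by
    intro u
    induction u with
    | zero =>
      intro _
      simp [Dyn.numLinks, D.G_init]
    | succ u ihu =>
      intro hu
      rw [out1 u (by omega), ihu (by omega)]
  have out2 : Dyn.numLinks (D.G (n - 1)) = n - 1 := hcount (n-1) le_rfl
  refine ⟨out1, out2, ?_⟩
  -- monotonicity of the number of links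
  have mono1 : ∀ b, Dyn.numLinks (D.G b) ≤ Dyn.numLinks (D.G (b+1)) := by
    intro b
    have hsub : ∀ j k, D.G b j k = true → D.G (b+1) j k = true := by
      intro j k hjk
      by_cases hGb : D.G b (D.l b) (D.h b) = true
      · rw [(D.step_old b hGb).1]; exact hjk
      · rw [Bool.not_eq_true] at hGb
        by_cases hcb : c < 2 / (n : ℝ) + (1 - 2 / (n : ℝ)) * acc n (D.G b) (D.P b (D.h b))
            - acc n (D.G b) (D.P b (D.l b))
        · exact ((D.step_add b hGb hcb).1 j k).mpr (Or.inl hjk)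
        · rw [(D.step_none b hGb hcb).1]; exact hjk
    unfold Dyn.numLinks
    apply Finset.card_le_card
    intro pr hpr
    rw [Finset.mem_filter] at hpr ⊢
    exact ⟨hpr.1, hpr.2.1, hsub _ _ hpr.2.2⟩
  have mono : ∀ a b : ℕ, a ≤ b → Dyn.numLinks (D.G a) ≤ Dyn.numLinks (D.G b) := by
    intro a b hab
    induction b, hab using Nat.le_induction with
    | base => exact le_rfl
    | succ b hb ihb => exact le_trans ihb (mono1 b)
  intro t hsteady
  rcases le_or_gt t (n-1) with hle | hgt
  · have hG := hsteady (n-1) hle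
    rw [← hG, out2]
  · exact out2 ▸ mono (n-1) t hgt.le
end

section
/- (Link concentration mechanism.) Let G be a network and i, j, h three distinct agents with G(i,h) = G(j,h) = 0. Suppose agent h's perception is fully correct, P^h = G, and suppose the perception P^k of every other agent k ∉ {h} satisfies P^k(k,m) = G(k,m) for all m and P^k(i,h) = P^k(j,h) = 0. Let G' be G with both links {i,h} and {j,h} added. Let the updated perceptions be: P'^i(a,b) = P^h(a,b) for a,b ≠ i and P'^i(i,m) = G'(i,m); symmetrically P'^j(a,b) = P^h(a,b) for a,b ≠ j and P'^j(j,m) = G'(j,m); P'^h equals P^h except P'^h(h,m) = G'(h,m) for all m; and every other agent k keeps P^k except P'^k(k,m) = G'(k,m) for all m. Then ρ(G',P'^h) = 1, ρ(G',P'^i) = ρ(G',P'^j) = 1 − 1/M (each of i and j misperceiving exactly the other's new link to h), and ρ(G',P'^k) = ρ(G,P^k) − 2/M ≤ 1 − 2/M for every k ∉ {i,j,h}; in particular h is the unique most accurate agent in the new state. -/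
open Finset

lemma Scard (n : ℕ) :
    2 * ((Finset.univ : Finset (Fin n × Fin n)).filter fun pr => pr.1 < pr.2).card
      = n * n - n := by
  have hb : ((Finset.univ : Finset (Fin n × Fin n)).filter fun pr => pr.1 < pr.2).card
      = ((Finset.univ : Finset (Fin n × Fin n)).filter fun pr => pr.2 < pr.1).card := by
    apply Finset.card_bij' (fun p _ => Prod.swap p) (fun p _ => Prod.swap p)
    · intro a ha; simp at ha ⊢; exact ha
    · intro a ha; simp at ha ⊢; exact ha
    · intro a _; simp
    · intro a _; simp
  have hu : ((Finset.univ : Finset (Fin n × Fin n)).filter fun pr => pr.1 < pr.2) ∪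
      ((Finset.univ : Finset (Fin n × Fin n)).filter fun pr => pr.2 < pr.1)
      = (Finset.univ : Finset (Fin n)).offDiag := by
    ext p
    simp [Finset.mem_offDiag, lt_or_lt_iff_ne]
  have hd : Disjoint ((Finset.univ : Finset (Fin n × Fin n)).filter fun pr => pr.1 < pr.2)
      ((Finset.univ : Finset (Fin n × Fin n)).filter fun pr => pr.2 < pr.1) := by
    rw [Finset.disjoint_left]
    intro p hp hq
    simp only [Finset.mem_filter] at hp hq
    exact absurd hq.2 (not_lt.mpr hp.2.le)
  have := Finset.card_union_of_disjoint hd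
  rw [hu, Finset.offDiag_card] at this
  simp at this
  omega

lemma acc_eq_s16 (n : ℕ) (hn : 2 ≤ n) (G P : Fin n → Fin n → Bool) :
    acc n G P = 1 -
      (((Finset.univ : Finset (Fin n × Fin n)).filter fun pr =>
        pr.1 < pr.2 ∧ ¬ (P pr.1 pr.2 = G pr.1 pr.2)).card : ℝ) / ((n:ℝ)*((n:ℝ)-1)/2) := by
  have h2 := Scard n
  have hsum : ((Finset.univ : Finset (Fin n × Fin n)).filter fun pr =>
        pr.1 < pr.2 ∧ P pr.1 pr.2 = G pr.1 pr.2).card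
      + ((Finset.univ : Finset (Fin n × Fin n)).filter fun pr =>
        pr.1 < pr.2 ∧ ¬ (P pr.1 pr.2 = G pr.1 pr.2)).card
      = ((Finset.univ : Finset (Fin n × Fin n)).filter fun pr => pr.1 < pr.2).card := by
    rw [← Finset.filter_filter, ← Finset.filter_filter]
    exact Finset.card_filter_add_card_filter_not _
  have hnr : (2:ℝ) ≤ (n:ℝ) := by exact_mod_cast hn
  have hMpos : (0:ℝ) < (n:ℝ)*((n:ℝ)-1)/2 := by nlinarith
  have hcast : (((Finset.univ : Finset (Fin n × Fin n)).filter fun pr => pr.1 < pr.2).card : ℝ)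
      = (n:ℝ)*((n:ℝ)-1)/2 := by
    have h1 : (n:ℕ) ≤ n*n := Nat.le_mul_of_pos_left _ (by omega)
    have h3 := congrArg (Nat.cast : ℕ → ℝ) h2
    push_cast [h1] at h3
    linarith
  unfold acc
  rw [eq_sub_iff_add_eq, ← add_div, div_eq_one_iff_eq (ne_of_gt hMpos), ← hcast]
  exact_mod_cast hsum

lemma pat_card1 (n : ℕ) (j h : Fin n) (hjh : j ≠ h) :
    ((Finset.univ : Finset (Fin n × Fin n)).filter fun pr =>
      pr.1 < pr.2 ∧ ((pr.1 = j ∧ pr.2 = h) ∨ (pr.1 = h ∧ pr.2 = j))).card = 1 := by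
  rcases hjh.lt_or_gt with hlt | hlt
  · have : ((Finset.univ : Finset (Fin n × Fin n)).filter fun pr =>
        pr.1 < pr.2 ∧ ((pr.1 = j ∧ pr.2 = h) ∨ (pr.1 = h ∧ pr.2 = j))) = {(j, h)} := by
      ext p
      simp only [Finset.mem_filter, Finset.mem_univ, true_and, Finset.mem_singleton,
        Prod.ext_iff]
      constructor
      · rintro ⟨hp, (⟨e1, e2⟩ | ⟨e1, e2⟩)⟩
        · exact ⟨e1, e2⟩
        · rw [e1, e2] at hp; exact absurd hp (asymm hlt)
      · rintro ⟨e1, e2⟩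
        exact ⟨by rw [e1, e2]; exact hlt, Or.inl ⟨e1, e2⟩⟩
    rw [this]; simp
  · have : ((Finset.univ : Finset (Fin n × Fin n)).filter fun pr =>
        pr.1 < pr.2 ∧ ((pr.1 = j ∧ pr.2 = h) ∨ (pr.1 = h ∧ pr.2 = j))) = {(h, j)} := by
      ext p
      simp only [Finset.mem_filter, Finset.mem_univ, true_and, Finset.mem_singleton,
        Prod.ext_iff]
      constructor
      · rintro ⟨hp, (⟨e1, e2⟩ | ⟨e1, e2⟩)⟩
        · rw [e1, e2] at hp; exact absurd hp (asymm hlt)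
        · exact ⟨e1, e2⟩
      · rintro ⟨e1, e2⟩
        exact ⟨by rw [e1, e2]; exact hlt, Or.inr ⟨e1, e2⟩⟩
    rw [this]; simp

lemma pat_card2 (n : ℕ) (i j h : Fin n) (hij : i ≠ j) (hih : i ≠ h) (hjh : j ≠ h) :
    ((Finset.univ : Finset (Fin n × Fin n)).filter fun pr =>
      pr.1 < pr.2 ∧ ((pr.1 = i ∧ pr.2 = h) ∨ (pr.1 = h ∧ pr.2 = i) ∨
        (pr.1 = j ∧ pr.2 = h) ∨ (pr.1 = h ∧ pr.2 = j))).card = 2 := by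
  have hsplit : ((Finset.univ : Finset (Fin n × Fin n)).filter fun pr =>
      pr.1 < pr.2 ∧ ((pr.1 = i ∧ pr.2 = h) ∨ (pr.1 = h ∧ pr.2 = i) ∨
        (pr.1 = j ∧ pr.2 = h) ∨ (pr.1 = h ∧ pr.2 = j)))
      = ((Finset.univ : Finset (Fin n × Fin n)).filter fun pr =>
          pr.1 < pr.2 ∧ ((pr.1 = i ∧ pr.2 = h) ∨ (pr.1 = h ∧ pr.2 = i)))
        ∪ ((Finset.univ : Finset (Fin n × Fin n)).filter fun pr =>
          pr.1 < pr.2 ∧ ((pr.1 = j ∧ pr.2 = h) ∨ (pr.1 = h ∧ pr.2 = j))) := by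
    ext p
    simp only [Finset.mem_filter, Finset.mem_union, Finset.mem_univ, true_and]
    tauto
  have hdisj : Disjoint
      ((Finset.univ : Finset (Fin n × Fin n)).filter fun pr =>
          pr.1 < pr.2 ∧ ((pr.1 = i ∧ pr.2 = h) ∨ (pr.1 = h ∧ pr.2 = i)))
      ((Finset.univ : Finset (Fin n × Fin n)).filter fun pr =>
          pr.1 < pr.2 ∧ ((pr.1 = j ∧ pr.2 = h) ∨ (pr.1 = h ∧ pr.2 = j))) := by
    rw [Finset.disjoint_left]
    intro p hp hq
    simp only [Finset.mem_filter, Finset.mem_univ, true_and] at hp hq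
    rcases hp.2 with ⟨e1, e2⟩ | ⟨e1, e2⟩ <;> rcases hq.2 with ⟨f1, f2⟩ | ⟨f1, f2⟩
    · exact hij (e1.symm.trans f1)
    · exact hih (e1.symm.trans f1)
    · exact hjh (f1.symm.trans e1)
    · exact hij (e2.symm.trans f2)
  rw [hsplit, Finset.card_union_of_disjoint hdisj, pat_card1 n i h hih, pat_card1 n j h hjh]
/-- Link concentration mechanism: `M = n(n−1)/2`; `P k` is agent `k`'s perception before,
`P' k` after, the two links `{i,h}` and `{j,h}` are added. -/
theorem stmt16 (n : ℕ) (hn : 4 ≤ n) (i j h : Fin n)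
    (hij : i ≠ j) (hih : i ≠ h) (hjh : j ≠ h)
    (G G' : Fin n → Fin n → Bool)
    (hGsym : ∀ a b, G a b = G b a) (hGirr : ∀ a, G a a = false)
    (hG'sym : ∀ a b, G' a b = G' b a) (hG'irr : ∀ a, G' a a = false)
    (hGih : G i h = false) (hGjh : G j h = false)
    (hG' : ∀ a b, G' a b = true ↔
      (G a b = true ∨ (a = i ∧ b = h) ∨ (a = h ∧ b = i) ∨ (a = j ∧ b = h) ∨ (a = h ∧ b = j)))
    (P P' : Fin n → Fin n → Fin n → Bool)
    (hPsym : ∀ k a b, P k a b = P k b a) (hPirr : ∀ k a, P k a a = false)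
    (hP'sym : ∀ k a b, P' k a b = P' k b a) (hP'irr : ∀ k a, P' k a a = false)
    (hPh : ∀ a b, P h a b = G a b)
    (hPother : ∀ k, k ≠ h → (∀ m, P k k m = G k m) ∧ P k i h = false ∧ P k j h = false)
    (hP'i_off : ∀ a b, a ≠ i → b ≠ i → P' i a b = P h a b)
    (hP'i_own : ∀ m, P' i i m = G' i m)
    (hP'j_off : ∀ a b, a ≠ j → b ≠ j → P' j a b = P h a b)
    (hP'j_own : ∀ m, P' j j m = G' j m)
    (hP'h_off : ∀ a b, a ≠ h → b ≠ h → P' h a b = P h a b)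
    (hP'h_own : ∀ m, P' h h m = G' h m)
    (hP'k_off : ∀ k, k ≠ i → k ≠ j → k ≠ h →
      ∀ a b, a ≠ k → b ≠ k → P' k a b = P k a b)
    (hP'k_own : ∀ k, k ≠ i → k ≠ j → k ≠ h → ∀ m, P' k k m = G' k m) :
    acc n G' (P' h) = 1 ∧
    acc n G' (P' i) = 1 - 1 / ((n : ℝ) * ((n : ℝ) - 1) / 2) ∧
    acc n G' (P' j) = 1 - 1 / ((n : ℝ) * ((n : ℝ) - 1) / 2) ∧
    (∀ k, k ≠ i → k ≠ j → k ≠ h →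
      acc n G' (P' k) = acc n G (P k) - 2 / ((n : ℝ) * ((n : ℝ) - 1) / 2) ∧
      acc n G' (P' k) ≤ 1 - 2 / ((n : ℝ) * ((n : ℝ) - 1) / 2)) ∧
    (∀ k, k ≠ h → acc n G' (P' k) < acc n G' (P' h)) := by
  have hn2 : 2 ≤ n := by omega
  have hnr : (2:ℝ) ≤ (n:ℝ) := by exact_mod_cast hn2
  have hM : (0:ℝ) < (n:ℝ)*((n:ℝ)-1)/2 := by nlinarith
  have hG'gen : ∀ a b : Fin n, ¬(a=i∧b=h) → ¬(a=h∧b=i) → ¬(a=j∧b=h) → ¬(a=h∧b=j) →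
      G' a b = G a b := by
    intro a b h1 h2 h3 h4
    cases hg : G a b
    · cases hg' : G' a b
      · rfl
      · rcases (hG' a b).mp hg' with h5 | h5 | h5 | h5 | h5
        · rw [hg] at h5; exact absurd h5 (by simp)
        · exact absurd h5 h1
        · exact absurd h5 h2
        · exact absurd h5 h3
        · exact absurd h5 h4
    · exact (hG' a b).mpr (Or.inl hg)
  have hG'ih : G' i h = true := (hG' i h).mpr (Or.inr (Or.inl ⟨rfl, rfl⟩))
  have hG'hi : G' h i = true := by rw [hG'sym]; exact hG'ih
  have hG'jh : G' j h = true := (hG' j h).mpr (Or.inr (Or.inr (Or.inr (Or.inl ⟨rfl, rfl⟩))))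
  have hG'hj : G' h j = true := by rw [hG'sym]; exact hG'jh
  have hGhi : G h i = false := by rw [hGsym]; exact hGih
  have hGhj : G h j = false := by rw [hGsym]; exact hGjh
  -- h's new perception is fully correct
  have hkeyh : ∀ a b : Fin n, P' h a b = G' a b := by
    intro a b
    by_cases ha : a = h
    · subst ha; exact hP'h_own b
    by_cases hb : b = h
    · subst hb; rw [hP'sym, hP'h_own, hG'sym]
    · rw [hP'h_off a b ha hb, hPh]
      exact (hG'gen a b (fun e => hb e.2) (fun e => ha e.1) (fun e => hb e.2)
        (fun e => ha e.1)).symm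
  have hDh : ((Finset.univ : Finset (Fin n × Fin n)).filter fun pr =>
      pr.1 < pr.2 ∧ ¬(P' h pr.1 pr.2 = G' pr.1 pr.2)) = ∅ := by
    rw [Finset.filter_eq_empty_iff]
    rintro p - ⟨-, hne⟩
    exact hne (hkeyh p.1 p.2)
  have acch : acc n G' (P' h) = 1 := by rw [acc_eq_s16 n hn2 G' (P' h), hDh]; simp
  -- agent i
  have hkeyi : ∀ a b : Fin n, a < b →
      (¬(P' i a b = G' a b) ↔ ((a = j ∧ b = h) ∨ (a = h ∧ b = j))) := by
    intro a b _
    by_cases hai : a = i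
    · subst hai
      rw [hP'i_own b]
      simp [hij, hih, hjh, Ne.symm hij, Ne.symm hih, Ne.symm hjh]
    by_cases hbi : b = i
    · subst hbi
      rw [hP'sym, hP'i_own, ← hG'sym]
      simp [hij, hih, hjh, Ne.symm hij, Ne.symm hih, Ne.symm hjh]
    · rw [hP'i_off a b hai hbi, hPh]
      by_cases h3 : a = j ∧ b = h
      · rcases h3 with ⟨e1, e2⟩; rw [e1, e2, hGjh, hG'jh]; simp
      by_cases h4 : a = h ∧ b = j
      · rcases h4 with ⟨e1, e2⟩; rw [e1, e2, hGhj, hG'hj]; simp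
      · rw [hG'gen a b (fun e => hai e.1) (fun e => hbi e.2) h3 h4]
        simp [h3, h4]
  have hDi : ((Finset.univ : Finset (Fin n × Fin n)).filter fun pr =>
      pr.1 < pr.2 ∧ ¬(P' i pr.1 pr.2 = G' pr.1 pr.2))
      = ((Finset.univ : Finset (Fin n × Fin n)).filter fun pr =>
      pr.1 < pr.2 ∧ ((pr.1 = j ∧ pr.2 = h) ∨ (pr.1 = h ∧ pr.2 = j))) := by
    apply Finset.filter_congr
    intro p _
    constructor
    · rintro ⟨hlt, hne⟩; exact ⟨hlt, (hkeyi _ _ hlt).mp hne⟩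
    · rintro ⟨hlt, hp⟩; exact ⟨hlt, (hkeyi _ _ hlt).mpr hp⟩
  have acci : acc n G' (P' i) = 1 - 1 / ((n : ℝ) * ((n : ℝ) - 1) / 2) := by
    rw [acc_eq_s16 n hn2 G' (P' i), hDi, pat_card1 n j h hjh]; norm_num
  -- agent j
  have hkeyj : ∀ a b : Fin n, a < b →
      (¬(P' j a b = G' a b) ↔ ((a = i ∧ b = h) ∨ (a = h ∧ b = i))) := by
    intro a b _
    by_cases haj : a = j
    · subst haj
      rw [hP'j_own b]
      simp [hij, hih, hjh, Ne.symm hij, Ne.symm hih, Ne.symm hjh]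
    by_cases hbj : b = j
    · subst hbj
      rw [hP'sym, hP'j_own, ← hG'sym]
      simp [hij, hih, hjh, Ne.symm hij, Ne.symm hih, Ne.symm hjh]
    · rw [hP'j_off a b haj hbj, hPh]
      by_cases h1 : a = i ∧ b = h
      · rcases h1 with ⟨e1, e2⟩; rw [e1, e2, hGih, hG'ih]; simp
      by_cases h2 : a = h ∧ b = i
      · rcases h2 with ⟨e1, e2⟩; rw [e1, e2, hGhi, hG'hi]; simp
      · rw [hG'gen a b h1 h2 (fun e => haj e.1) (fun e => hbj e.2)]
        simp [h1, h2]
  have hDj : ((Finset.univ : Finset (Fin n × Fin n)).filter fun pr =>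
      pr.1 < pr.2 ∧ ¬(P' j pr.1 pr.2 = G' pr.1 pr.2))
      = ((Finset.univ : Finset (Fin n × Fin n)).filter fun pr =>
      pr.1 < pr.2 ∧ ((pr.1 = i ∧ pr.2 = h) ∨ (pr.1 = h ∧ pr.2 = i))) := by
    apply Finset.filter_congr
    intro p _
    constructor
    · rintro ⟨hlt, hne⟩; exact ⟨hlt, (hkeyj _ _ hlt).mp hne⟩
    · rintro ⟨hlt, hp⟩; exact ⟨hlt, (hkeyj _ _ hlt).mpr hp⟩
  have accj : acc n G' (P' j) = 1 - 1 / ((n : ℝ) * ((n : ℝ) - 1) / 2) := by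
    rw [acc_eq_s16 n hn2 G' (P' j), hDj, pat_card1 n i h hih]; norm_num
  -- other agents
  have main4 : ∀ k, k ≠ i → k ≠ j → k ≠ h →
      acc n G' (P' k) = acc n G (P k) - 2 / ((n : ℝ) * ((n : ℝ) - 1) / 2) ∧
      acc n G' (P' k) ≤ 1 - 2 / ((n : ℝ) * ((n : ℝ) - 1) / 2) := by
    intro k hki hkj hkh
    obtain ⟨hkown, hkih, hkjh⟩ := hPother k hkh
    have hkhi : P k h i = false := by rw [hPsym]; exact hkih
    have hkhj : P k h j = false := by rw [hPsym]; exact hkjh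
    have hkeyk : ∀ a b : Fin n,
        (¬(P' k a b = G' a b) ↔ (¬(P k a b = G a b) ∨
          ((a = i ∧ b = h) ∨ (a = h ∧ b = i) ∨ (a = j ∧ b = h) ∨ (a = h ∧ b = j)))) := by
      intro a b
      by_cases hak : a = k
      · subst hak
        rw [hP'k_own a hki hkj hkh b, hkown b]
        simp [hki, hkj, hkh, Ne.symm hki, Ne.symm hkj, Ne.symm hkh]
      by_cases hbk : b = k
      · subst hbk
        rw [hP'sym, hP'k_own b hki hkj hkh a, ← hG'sym, hPsym, hkown a, ← hGsym]
        simp [hki, hkj, hkh, Ne.symm hki, Ne.symm hkj, Ne.symm hkh]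
      · rw [hP'k_off k hki hkj hkh a b hak hbk]
        by_cases h1 : a = i ∧ b = h
        · rcases h1 with ⟨e1, e2⟩; rw [e1, e2, hkih, hGih, hG'ih]; simp
        by_cases h2 : a = h ∧ b = i
        · rcases h2 with ⟨e1, e2⟩; rw [e1, e2, hkhi, hGhi, hG'hi]; simp
        by_cases h3 : a = j ∧ b = h
        · rcases h3 with ⟨e1, e2⟩; rw [e1, e2, hkjh, hGjh, hG'jh]; simp
        by_cases h4 : a = h ∧ b = j
        · rcases h4 with ⟨e1, e2⟩; rw [e1, e2, hkhj, hGhj, hG'hj]; simp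
        · rw [hG'gen a b h1 h2 h3 h4]
          simp [h1, h2, h3, h4]
    have hDk : ((Finset.univ : Finset (Fin n × Fin n)).filter fun pr =>
        pr.1 < pr.2 ∧ ¬(P' k pr.1 pr.2 = G' pr.1 pr.2))
        = ((Finset.univ : Finset (Fin n × Fin n)).filter fun pr =>
            pr.1 < pr.2 ∧ ¬(P k pr.1 pr.2 = G pr.1 pr.2))
          ∪ ((Finset.univ : Finset (Fin n × Fin n)).filter fun pr =>
            pr.1 < pr.2 ∧ ((pr.1 = i ∧ pr.2 = h) ∨ (pr.1 = h ∧ pr.2 = i) ∨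
              (pr.1 = j ∧ pr.2 = h) ∨ (pr.1 = h ∧ pr.2 = j))) := by
      ext p
      simp only [Finset.mem_filter, Finset.mem_union, Finset.mem_univ, true_and]
      constructor
      · rintro ⟨hlt, hne⟩
        rcases (hkeyk p.1 p.2).mp hne with ho | hp
        · exact Or.inl ⟨hlt, ho⟩
        · exact Or.inr ⟨hlt, hp⟩
      · rintro (⟨hlt, ho⟩ | ⟨hlt, hp⟩)
        · exact ⟨hlt, (hkeyk p.1 p.2).mpr (Or.inl ho)⟩
        · exact ⟨hlt, (hkeyk p.1 p.2).mpr (Or.inr hp)⟩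
    have hdisj : Disjoint
        ((Finset.univ : Finset (Fin n × Fin n)).filter fun pr =>
            pr.1 < pr.2 ∧ ¬(P k pr.1 pr.2 = G pr.1 pr.2))
        ((Finset.univ : Finset (Fin n × Fin n)).filter fun pr =>
            pr.1 < pr.2 ∧ ((pr.1 = i ∧ pr.2 = h) ∨ (pr.1 = h ∧ pr.2 = i) ∨
              (pr.1 = j ∧ pr.2 = h) ∨ (pr.1 = h ∧ pr.2 = j))) := by
      rw [Finset.disjoint_left]
      rintro p hp hq
      simp only [Finset.mem_filter, Finset.mem_univ, true_and] at hp hq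
      apply hp.2
      rcases hq.2 with ⟨e1, e2⟩ | ⟨e1, e2⟩ | ⟨e1, e2⟩ | ⟨e1, e2⟩
      · rw [e1, e2, hkih, hGih]
      · rw [e1, e2, hkhi, hGhi]
      · rw [e1, e2, hkjh, hGjh]
      · rw [e1, e2, hkhj, hGhj]
    have hle1 : acc n G (P k) ≤ 1 := by
      rw [acc_eq_s16 n hn2 G (P k)]
      have h0 : (0:ℝ) ≤ (((Finset.univ : Finset (Fin n × Fin n)).filter fun pr =>
          pr.1 < pr.2 ∧ ¬(P k pr.1 pr.2 = G pr.1 pr.2)).card : ℝ) / ((n:ℝ)*((n:ℝ)-1)/2) :=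
        div_nonneg (Nat.cast_nonneg _) hM.le
      linarith
    have hacck : acc n G' (P' k) = acc n G (P k) - 2 / ((n : ℝ) * ((n : ℝ) - 1) / 2) := by
      rw [acc_eq_s16 n hn2 G' (P' k), acc_eq_s16 n hn2 G (P k), hDk,
        Finset.card_union_of_disjoint hdisj, pat_card2 n i j h hij hih hjh]
      push_cast
      ring
    exact ⟨hacck, by rw [hacck]; linarith⟩
  refine ⟨acch, acci, accj, main4, ?_⟩
  intro k hk
  rw [acch]
  have h1M : (0:ℝ) < 1 / ((n : ℝ) * ((n : ℝ) - 1) / 2) := by positivity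
  by_cases hki : k = i
  · subst hki; rw [acci]; linarith
  by_cases hkj : k = j
  · subst hkj; rw [accj]; linarith
  · have := (main4 k hki hkj hk).2
    have h2M : (0:ℝ) < 2 / ((n : ℝ) * ((n : ℝ) - 1) / 2) := by positivity
    linarith
end
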